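/- arXiv:1808.04807 — 3 statements merged into one kernel-verified Lean document; each statement's English description precedes it below -/
import Mathlib

section
/- Let G be a graph whose vertex set can be partitioned into at most k parts, each inducing a subgraph with internal conductance at least φ. Then the (k+1)-st smallest eigenvalue λ_{k+1} of the normalized Laplacian of G satisfies λ_{k+1} ≥ φ²/2. -/
open Matrix Finset

/-- The eigenvalues of a symmetric real matrix, sorted in increasing order
(junk value `[]` for non-symmetric matrices). -/
noncomputable def sortedEigs {n : Type*} [Fintype n] [DecidableEq n]
    (B : Matrix n n ℝ) : List ℝ :=
  if hB : B.IsHermitian then (Finset.univ.val.map hB.eigenvalues).sort (· ≤ ·) else []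

/-- `muSmallest B j` is the `j`-th smallest eigenvalue (1-indexed) of a symmetric
real matrix `B`. -/
noncomputable def muSmallest {n : Type*} [Fintype n] [DecidableEq n]
    (B : Matrix n n ℝ) (j : ℕ) : ℝ :=
  (sortedEigs B).getD (j - 1) 0

/-- The normalized Laplacian `L = I - D^(-1/2) A D^(-1/2)` of a graph. -/
noncomputable def normLap {V : Type*} [Fintype V] [DecidableEq V]
    (G : SimpleGraph V) [DecidableRel G.Adj] : Matrix V V ℝ :=
  1 - (Matrix.diagonal fun v => (Real.sqrt (G.degree v))⁻¹) * G.adjMatrix ℝ *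
      (Matrix.diagonal fun v => (Real.sqrt (G.degree v))⁻¹)

/-- The internal conductance of a vertex subset `C`: the infimum over `S ⊆ C` with
`0 < vol S ≤ vol C / 2` of the number of edges from `S` to `C \ S` divided by `vol S`;
it is `1` when `|C| ≤ 1`. -/
noncomputable def intConductance {V : Type*} [Fintype V] [DecidableEq V]
    (G : SimpleGraph V) [DecidableRel G.Adj] (C : Finset V) : ℝ :=
  if C.card ≤ 1 then 1 else
    sInf {x : ℝ | ∃ S ⊆ C, 0 < (∑ v ∈ S, (G.degree v : ℝ)) ∧
      2 * (∑ v ∈ S, (G.degree v : ℝ)) ≤ (∑ v ∈ C, (G.degree v : ℝ)) ∧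
      x = (∑ v ∈ S, ∑ w ∈ C \ S, if G.Adj v w then (1 : ℝ) else 0) /
            (∑ v ∈ S, (G.degree v : ℝ))}


section AUX
set_option linter.unusedSectionVars false

section coarea
variable {V : Type*} [Fintype V] [DecidableEq V]

/-- Discrete co-area inequality. -/
lemma coarea_aux (C : Finset V) (B : V → V → ℝ) (d : V → ℝ) (φ : ℝ)
    (hB0 : ∀ v w, 0 ≤ B v w) (hBsymm : ∀ v w, B v w = B w v)
    (hd : ∀ v, 0 ≤ d v) (hφ : 0 ≤ φ)
    (hcond : ∀ S ⊆ C, 2 * (∑ v ∈ S, d v) ≤ ∑ v ∈ C, d v →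
      φ * (∑ v ∈ S, d v) ≤ ∑ v ∈ S, ∑ w ∈ C \ S, B v w) :
    ∀ (n : ℕ) (h : V → ℝ), (C.filter (fun v => h v ≠ 0)).card ≤ n →
      (∀ v, 0 ≤ h v) →
      2 * (∑ v ∈ C.filter (fun v => h v ≠ 0), d v) ≤ ∑ v ∈ C, d v →
      2 * (φ * ∑ v ∈ C, d v * h v) ≤ ∑ v ∈ C, ∑ w ∈ C, B v w * |h v - h w| := by
  intro n
  induction n with
  | zero =>
    intro h hcard _ _
    have hfe : C.filter (fun v => h v ≠ 0) = ∅ := card_eq_zero.mp (Nat.le_zero.mp hcard)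
    have hz : ∀ v ∈ C, h v = 0 := by
      intro v hv
      by_contra hne
      have : v ∈ C.filter (fun v => h v ≠ 0) := mem_filter.mpr ⟨hv, hne⟩
      simp [hfe] at this
    have h1 : (∑ v ∈ C, d v * h v) = 0 := by
      apply Finset.sum_eq_zero; intro v hv; rw [hz v hv]; ring
    have h2 : (∑ v ∈ C, ∑ w ∈ C, B v w * |h v - h w|) = 0 := by
      apply Finset.sum_eq_zero; intro v hv
      apply Finset.sum_eq_zero; intro w hw
      rw [hz v hv, hz w hw]; simp
    rw [h1, h2]; simp
  | succ n ih =>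
    intro h hcard hh hsupp
    set S := C.filter (fun v => h v ≠ 0) with hS
    rcases S.eq_empty_or_nonempty with hSe | hSne
    · exact ih h (by rw [hS] at hSe; simp [hSe]) hh hsupp
    · -- α : minimal value of h on S
      obtain ⟨v₀, hv₀S, hv₀min⟩ := S.exists_min_image h hSne
      set α := h v₀ with hα
      have hSsubC : S ⊆ C := filter_subset _ _
      have hαpos : 0 < α := by
        rcases (mem_filter.mp hv₀S).2.lt_or_gt with hlt | hgt
        · exact absurd (hh v₀) (not_le.mpr hlt)
        · exact hgt
      have hge : ∀ v ∈ S, α ≤ h v := fun v hv => hv₀min v hv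
      have hzero : ∀ v ∈ C, v ∉ S → h v = 0 := by
        intro v hv hvs
        by_contra hne
        exact hvs (mem_filter.mpr ⟨hv, hne⟩)
      -- new function
      set h' : V → ℝ := fun v => if v ∈ S then h v - α else 0 with hh'
      have hh'0 : ∀ v, 0 ≤ h' v := by
        intro v; rw [hh']; dsimp only
        split
        · next hv => linarith [hge v hv]
        · exact le_refl 0
      have hfsub : C.filter (fun v => h' v ≠ 0) ⊆ S.erase v₀ := by
        intro v hv
        rw [mem_filter] at hv
        have hvS : v ∈ S := by
          by_contra hvs
          exact hv.2 (by rw [hh']; simp [hvs])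
        refine mem_erase.mpr ⟨?_, hvS⟩
        intro hvv
        apply hv.2
        rw [hh']; simp only [hvS, if_true]
        rw [hvv, ← hα]; ring
      have hcard' : (C.filter (fun v => h' v ≠ 0)).card ≤ n := by
        calc (C.filter (fun v => h' v ≠ 0)).card ≤ (S.erase v₀).card := card_le_card hfsub
        _ = S.card - 1 := card_erase_of_mem hv₀S
        _ ≤ n := by omega
      have hsub2 : ∀ T ⊆ S, (∑ v ∈ T, d v) ≤ ∑ v ∈ S, d v := fun T hT =>
        sum_le_sum_of_subset_of_nonneg hT (fun v _ _ => hd v)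
      have hsupp' : 2 * (∑ v ∈ C.filter (fun v => h' v ≠ 0), d v) ≤ ∑ v ∈ C, d v := by
        have := hsub2 _ (hfsub.trans (erase_subset _ _))
        linarith
      have IH := ih h' hcard' hh'0 hsupp'
      -- identity (a)
      have ha : (∑ v ∈ C, d v * h v) = (∑ v ∈ C, d v * h' v) + α * ∑ v ∈ S, d v := by
        rw [← Finset.sum_sdiff hSsubC, ← Finset.sum_sdiff hSsubC (f := fun v => d v * h' v)]
        have e1 : ∀ v ∈ C \ S, d v * h v = d v * h' v := by
          intro v hv
          rw [mem_sdiff] at hv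
          rw [hzero v hv.1 hv.2, hh']; simp [hv.2]
        rw [Finset.sum_congr rfl e1]
        have e2 : ∀ v ∈ S, d v * h v = d v * h' v + α * d v := by
          intro v hv
          rw [hh']; simp only [hv, if_true]; ring
        rw [Finset.sum_congr rfl e2, Finset.sum_add_distrib, ← Finset.mul_sum]
        ring
      -- identity (b)
      have hb : (∑ v ∈ C, ∑ w ∈ C, B v w * |h v - h w|)
          = (∑ v ∈ C, ∑ w ∈ C, B v w * |h' v - h' w|)
            + 2 * α * ∑ v ∈ S, ∑ w ∈ C \ S, B v w := by
        have hCsplit : ∀ (F : V → ℝ), (∑ v ∈ C, F v) = (∑ v ∈ C \ S, F v) + ∑ v ∈ S, F v :=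
          fun F => (Finset.sum_sdiff hSsubC).symm
        rw [hCsplit (fun v => ∑ w ∈ C, B v w * |h v - h w|),
            hCsplit (fun v => ∑ w ∈ C, B v w * |h' v - h' w|)]
        have hrow : ∀ v, (∑ w ∈ C, B v w * |h v - h w|)
            = (∑ w ∈ C \ S, B v w * |h v - h w|) + ∑ w ∈ S, B v w * |h v - h w| :=
          fun v => (Finset.sum_sdiff hSsubC).symm
        have hrow' : ∀ v, (∑ w ∈ C, B v w * |h' v - h' w|)
            = (∑ w ∈ C \ S, B v w * |h' v - h' w|) + ∑ w ∈ S, B v w * |h' v - h' w| :=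
          fun v => (Finset.sum_sdiff hSsubC).symm
        simp only [hrow, hrow', Finset.sum_add_distrib]
        have hval : ∀ v ∈ S, h v = h' v + α := by
          intro v hv; rw [hh']; simp only [hv, if_true]; ring
        have hval0 : ∀ v ∈ C \ S, h v = 0 := by
          intro v hv; rw [mem_sdiff] at hv; exact hzero v hv.1 hv.2
        have hval0' : ∀ v ∈ C \ S, h' v = 0 := by
          intro v hv; rw [mem_sdiff] at hv; rw [hh']; simp [hv.2]
        have b1 : (∑ v ∈ C \ S, ∑ w ∈ C \ S, B v w * |h v - h w|)
            = ∑ v ∈ C \ S, ∑ w ∈ C \ S, B v w * |h' v - h' w| := by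
          refine Finset.sum_congr rfl fun v hv => Finset.sum_congr rfl fun w hw => ?_
          rw [hval0 v hv, hval0 w hw, hval0' v hv, hval0' w hw]
        have b2 : (∑ v ∈ S, ∑ w ∈ S, B v w * |h v - h w|)
            = ∑ v ∈ S, ∑ w ∈ S, B v w * |h' v - h' w| := by
          refine Finset.sum_congr rfl fun v hv => Finset.sum_congr rfl fun w hw => ?_
          rw [hval v hv, hval w hw]
          congr 1
          rw [add_sub_add_right_eq_sub]
        have habs : ∀ v ∈ S, ∀ w ∈ C \ S, |h v - h w| = |h' v - h' w| + α := by
          intro v hv w hw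
          rw [hval v hv, hval0 w hw, hval0' w hw]
          have h1 : 0 ≤ h' v := hh'0 v
          rw [sub_zero, sub_zero, abs_of_nonneg h1, abs_of_nonneg (by linarith [hαpos] : (0:ℝ) ≤ h' v + α)]
        have b3 : (∑ v ∈ S, ∑ w ∈ C \ S, B v w * |h v - h w|)
            = (∑ v ∈ S, ∑ w ∈ C \ S, B v w * |h' v - h' w|) + α * ∑ v ∈ S, ∑ w ∈ C \ S, B v w := by
          rw [Finset.mul_sum]
          rw [← Finset.sum_add_distrib]
          refine Finset.sum_congr rfl fun v hv => ?_
          rw [Finset.mul_sum, ← Finset.sum_add_distrib]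
          refine Finset.sum_congr rfl fun w hw => ?_
          rw [habs v hv w hw]; ring
        have b4 : (∑ v ∈ C \ S, ∑ w ∈ S, B v w * |h v - h w|)
            = (∑ v ∈ C \ S, ∑ w ∈ S, B v w * |h' v - h' w|) + α * ∑ v ∈ S, ∑ w ∈ C \ S, B v w := by
          rw [Finset.sum_comm, Finset.sum_comm (s := C \ S) (t := S) (f := fun v w => B v w * |h' v - h' w|)]
          rw [Finset.mul_sum, ← Finset.sum_add_distrib]
          refine Finset.sum_congr rfl fun v hv => ?_
          rw [Finset.mul_sum, ← Finset.sum_add_distrib]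
          refine Finset.sum_congr rfl fun w hw => ?_
          rw [hBsymm w v, abs_sub_comm (h w) (h v), abs_sub_comm (h' w) (h' v),
            habs v hv w hw]
          ring
        rw [b1, b2, b3, b4]; ring
      have hce : φ * (∑ v ∈ S, d v) ≤ ∑ v ∈ S, ∑ w ∈ C \ S, B v w := hcond S hSsubC hsupp
      have h2α : 2 * α * (φ * ∑ v ∈ S, d v) ≤ 2 * α * ∑ v ∈ S, ∑ w ∈ C \ S, B v w :=
        mul_le_mul_of_nonneg_left hce (by linarith)
      rw [ha, hb]
      linarith
end coarea

section lemA
variable {V : Type*} [Fintype V] [DecidableEq V]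

set_option linter.unusedSectionVars false in
/-- Cheeger-type bound for a nonnegative function with small support. -/
lemma cheeger_fn (C : Finset V) (B : V → V → ℝ) (d : V → ℝ) (φ : ℝ)
    (hB01 : ∀ v w, B v w = 0 ∨ B v w = 1) (hBsymm : ∀ v w, B v w = B w v)
    (hBd : ∀ v, (∑ w ∈ C, B v w) ≤ d v)
    (hd : ∀ v, 0 ≤ d v) (hφ : 0 ≤ φ)
    (hcond : ∀ S ⊆ C, 2 * (∑ v ∈ S, d v) ≤ ∑ v ∈ C, d v →
      φ * (∑ v ∈ S, d v) ≤ ∑ v ∈ S, ∑ w ∈ C \ S, B v w)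
    (g : V → ℝ) (hg : ∀ v, 0 ≤ g v)
    (hsupp : 2 * (∑ v ∈ C.filter (fun v => g v ≠ 0), d v) ≤ ∑ v ∈ C, d v) :
    φ ^ 2 * (∑ v ∈ C, d v * g v ^ 2) ≤ ∑ v ∈ C, ∑ w ∈ C, B v w * (g v - g w) ^ 2 := by
  have hB0 : ∀ v w, 0 ≤ B v w := by
    intro v w; rcases hB01 v w with h | h <;> rw [h] <;> norm_num
  set D := ∑ v ∈ C, d v * g v ^ 2 with hD
  set N := ∑ v ∈ C, ∑ w ∈ C, B v w * (g v - g w) ^ 2 with hN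
  set K := ∑ v ∈ C, ∑ w ∈ C, B v w * |g v ^ 2 - g w ^ 2| with hK
  have hD0 : 0 ≤ D := Finset.sum_nonneg fun v _ => mul_nonneg (hd v) (sq_nonneg _)
  have hN0 : 0 ≤ N := Finset.sum_nonneg fun v _ => Finset.sum_nonneg fun w _ =>
    mul_nonneg (hB0 v w) (sq_nonneg _)
  -- coarea applied to h = g^2
  have hKco : 2 * (φ * D) ≤ K := by
    have hfilt : C.filter (fun v => g v ^ 2 ≠ 0) = C.filter (fun v => g v ≠ 0) := by
      apply Finset.filter_congr; intro v _; simp [pow_eq_zero_iff]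
    exact coarea_aux C B d φ hB0 hBsymm hd hφ hcond (C.card) (fun v => g v ^ 2)
      (by exact card_le_card (filter_subset _ _)) (fun v => sq_nonneg _)
      (by rw [hfilt]; exact hsupp)
  -- Cauchy-Schwarz
  have hCS : K ^ 2 ≤ N * (∑ v ∈ C, ∑ w ∈ C, B v w * (g v + g w) ^ 2) := by
    have h1 : K = ∑ p ∈ C ×ˢ C, (B p.1 p.2 * |g p.1 - g p.2|) * (B p.1 p.2 * (g p.1 + g p.2)) := by
      rw [hK, Finset.sum_product]
      refine Finset.sum_congr rfl fun v _ => Finset.sum_congr rfl fun w _ => ?_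
      have hBsq : B v w * B v w = B v w := by
        rcases hB01 v w with h | h <;> rw [h] <;> ring
      have habs : |g v ^ 2 - g w ^ 2| = |g v - g w| * (g v + g w) := by
        rw [← abs_of_nonneg (add_nonneg (hg v) (hg w)), ← abs_mul]
        congr 1; ring
      rw [habs]
      linear_combination (-(|g v - g w| * (g v + g w))) * hBsq
    have h2 : N = ∑ p ∈ C ×ˢ C, (B p.1 p.2 * |g p.1 - g p.2|) ^ 2 := by
      rw [hN, Finset.sum_product]
      refine Finset.sum_congr rfl fun v _ => Finset.sum_congr rfl fun w _ => ?_
      have hBsq : B v w * B v w = B v w := by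
        rcases hB01 v w with h | h <;> rw [h] <;> ring
      rw [mul_pow, sq_abs]
      linear_combination (-((g v - g w) ^ 2)) * hBsq
    have h3 : (∑ v ∈ C, ∑ w ∈ C, B v w * (g v + g w) ^ 2)
        = ∑ p ∈ C ×ˢ C, (B p.1 p.2 * (g p.1 + g p.2)) ^ 2 := by
      rw [Finset.sum_product]
      refine Finset.sum_congr rfl fun v _ => Finset.sum_congr rfl fun w _ => ?_
      have hBsq : B v w * B v w = B v w := by
        rcases hB01 v w with h | h <;> rw [h] <;> ring
      rw [mul_pow]
      linear_combination (-((g v + g w) ^ 2)) * hBsq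
    rw [h1, h2, h3]
    exact Finset.sum_mul_sq_le_sq_mul_sq _ _ _
  -- bound the (g v + g w)^2 sum
  have hM : (∑ v ∈ C, ∑ w ∈ C, B v w * (g v + g w) ^ 2) ≤ 4 * D := by
    have step1 : (∑ v ∈ C, ∑ w ∈ C, B v w * (g v + g w) ^ 2)
        ≤ ∑ v ∈ C, ∑ w ∈ C, B v w * (2 * g v ^ 2 + 2 * g w ^ 2) := by
      refine Finset.sum_le_sum fun v _ => Finset.sum_le_sum fun w _ => ?_
      have := sq_nonneg (g v - g w)
      nlinarith [hB0 v w]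
    have t1 : (∑ v ∈ C, ∑ w ∈ C, B v w * (2 * g v ^ 2))
        = 2 * ∑ v ∈ C, g v ^ 2 * ∑ w ∈ C, B v w := by
      rw [Finset.mul_sum]
      refine Finset.sum_congr rfl fun v _ => ?_
      rw [Finset.mul_sum, Finset.mul_sum]
      exact Finset.sum_congr rfl fun w _ => by ring
    have t2 : (∑ v ∈ C, ∑ w ∈ C, B v w * (2 * g w ^ 2))
        = 2 * ∑ w ∈ C, g w ^ 2 * ∑ v ∈ C, B w v := by
      rw [Finset.sum_comm, Finset.mul_sum]
      refine Finset.sum_congr rfl fun w _ => ?_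
      rw [Finset.mul_sum, Finset.mul_sum]
      refine Finset.sum_congr rfl fun v _ => ?_
      rw [hBsymm v w]; ring
    have split : (∑ v ∈ C, ∑ w ∈ C, B v w * (2 * g v ^ 2 + 2 * g w ^ 2))
        = (∑ v ∈ C, ∑ w ∈ C, B v w * (2 * g v ^ 2))
          + (∑ v ∈ C, ∑ w ∈ C, B v w * (2 * g w ^ 2)) := by
      simp only [mul_add, Finset.sum_add_distrib]
    have hsum1 : (∑ v ∈ C, g v ^ 2 * ∑ w ∈ C, B v w) ≤ D := by
      rw [hD]
      refine Finset.sum_le_sum fun v _ => ?_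
      have h1 := hBd v
      nlinarith [sq_nonneg (g v)]
    have hsum2 : (∑ w ∈ C, g w ^ 2 * ∑ v ∈ C, B w v) ≤ D := by
      rw [hD]
      refine Finset.sum_le_sum fun w _ => ?_
      have h1 := hBd w
      nlinarith [sq_nonneg (g w)]
    linarith
  -- combine
  rcases eq_or_lt_of_le hD0 with hDz | hDpos
  · rw [← hDz]; simpa using hN0
  · have hKnn : 0 ≤ K := le_trans (by positivity) hKco
    have h1 : (2 * (φ * D)) ^ 2 ≤ K ^ 2 := by
      apply pow_le_pow_left₀ (by positivity) hKco
    have h2 : N * (∑ v ∈ C, ∑ w ∈ C, B v w * (g v + g w) ^ 2) ≤ N * (4 * D) :=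
      mul_le_mul_of_nonneg_left hM hN0
    have hfin : (φ ^ 2 * D) * (4 * D) ≤ N * (4 * D) := by nlinarith [h1, hCS, h2]
    exact le_of_mul_le_mul_right hfin (by positivity)
end lemA

section lemB
variable {V : Type*} [Fintype V] [DecidableEq V]

lemma max_sq_ineq (x y : ℝ) :
    (max x 0 - max y 0) ^ 2 + (max (-x) 0 - max (-y) 0) ^ 2 ≤ (x - y) ^ 2 := by
  rcases le_total x 0 with hx | hx <;> rcases le_total y 0 with hy | hy
  · rw [max_eq_right hx, max_eq_right hy, max_eq_left (neg_nonneg.mpr hx),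
      max_eq_left (neg_nonneg.mpr hy)]
    nlinarith
  · rw [max_eq_right hx, max_eq_left hy, max_eq_left (neg_nonneg.mpr hx),
      max_eq_right (neg_nonpos.mpr hy)]
    nlinarith [mul_nonneg (neg_nonneg.mpr hx) hy]
  · rw [max_eq_left hx, max_eq_right hy, max_eq_right (neg_nonpos.mpr hx),
      max_eq_left (neg_nonneg.mpr hy)]
    nlinarith [mul_nonneg hx (neg_nonneg.mpr hy)]
  · rw [max_eq_left hx, max_eq_left hy, max_eq_right (neg_nonpos.mpr hx),
      max_eq_right (neg_nonpos.mpr hy)]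
    nlinarith

lemma max_sq_decomp (x : ℝ) : (max x 0) ^ 2 + (max (-x) 0) ^ 2 = x ^ 2 := by
  rcases le_total x 0 with hx | hx
  · rw [max_eq_right hx, max_eq_left (neg_nonneg.mpr hx)]; ring
  · rw [max_eq_left hx, max_eq_right (neg_nonpos.mpr hx)]; ring

set_option linter.unusedSectionVars false in
/-- Cheeger-type bound for a function with zero weighted mean on `C`. -/
lemma cheeger_part (C : Finset V) (B : V → V → ℝ) (d : V → ℝ) (φ : ℝ)
    (hB01 : ∀ v w, B v w = 0 ∨ B v w = 1) (hBsymm : ∀ v w, B v w = B w v)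
    (hBd : ∀ v, (∑ w ∈ C, B v w) ≤ d v)
    (hd : ∀ v, 0 ≤ d v) (hφ : 0 ≤ φ)
    (hcond : ∀ S ⊆ C, 2 * (∑ v ∈ S, d v) ≤ ∑ v ∈ C, d v →
      φ * (∑ v ∈ S, d v) ≤ ∑ v ∈ S, ∑ w ∈ C \ S, B v w)
    (z : V → ℝ) (hz : ∑ v ∈ C, d v * z v = 0) :
    φ ^ 2 * (∑ v ∈ C, d v * z v ^ 2) ≤ ∑ v ∈ C, ∑ w ∈ C, B v w * (z v - z w) ^ 2 := by
  classical
  have hB0 : ∀ v w, 0 ≤ B v w := by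
    intro v w; rcases hB01 v w with h | h <;> rw [h] <;> norm_num
  rcases C.eq_empty_or_nonempty with hCe | hCne
  · simp [hCe]
  have hvolC : 0 ≤ ∑ v ∈ C, d v := Finset.sum_nonneg fun v _ => hd v
  -- find the weighted median c
  set T := C.filter (fun v => 2 * ∑ w ∈ C.filter (fun w => z v < z w), d w ≤ ∑ w ∈ C, d w)
    with hT
  have hTne : T.Nonempty := by
    obtain ⟨v₁, hv₁C, hmax⟩ := C.exists_max_image z hCne
    refine ⟨v₁, mem_filter.mpr ⟨hv₁C, ?_⟩⟩
    have : C.filter (fun w => z v₁ < z w) = ∅ := by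
      apply Finset.filter_eq_empty_iff.mpr
      intro w hw
      exact not_lt.mpr (hmax w hw)
    rw [this]; simpa using hvolC
  obtain ⟨v₂, hv₂T, hmin⟩ := T.exists_min_image z hTne
  set c := z v₂ with hc
  have hprop1 : 2 * (∑ w ∈ C.filter (fun w => c < z w), d w) ≤ ∑ w ∈ C, d w :=
    (mem_filter.mp hv₂T).2
  have hprop2 : 2 * (∑ w ∈ C.filter (fun w => z w < c), d w) ≤ ∑ w ∈ C, d w := by
    by_contra hcon
    push_neg at hcon
    set U := C.filter (fun w => z w < c) with hU
    have hUC : U ⊆ C := filter_subset _ _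
    have hUne : U.Nonempty := by
      rcases U.eq_empty_or_nonempty with hUe | h
      · rw [hUe] at hcon; simp at hcon; linarith
      · exact h
    obtain ⟨u, huU, humax⟩ := U.exists_max_image z hUne
    have huC : u ∈ C := hUC huU
    have huc : z u < c := (mem_filter.mp huU).2
    have hfilt : C.filter (fun w => z u < z w) = C \ U := by
      ext w
      rw [mem_filter, mem_sdiff]
      constructor
      · rintro ⟨hwC, hlt⟩
        refine ⟨hwC, fun hw => ?_⟩
        exact not_lt.mpr (humax w hw) hlt
      · rintro ⟨hwC, hnw⟩
        refine ⟨hwC, ?_⟩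
        have hnl : ¬ z w < c := by
          intro hlt
          exact hnw (by rw [hU]; exact mem_filter.mpr ⟨hwC, hlt⟩)
        push_neg at hnl
        linarith
    have hvolsplit : (∑ w ∈ C \ U, d w) = (∑ w ∈ C, d w) - ∑ w ∈ U, d w := by
      rw [eq_sub_iff_add_eq, Finset.sum_sdiff hUC]
    have huT : u ∈ T := by
      rw [hT, mem_filter]
      refine ⟨huC, ?_⟩
      rw [hfilt, hvolsplit]
      linarith
    exact absurd (hmin u huT) (not_le.mpr huc)
  -- split z - c into positive and negative parts
  set pp : V → ℝ := fun v => max (z v - c) 0 with hpp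
  set pm : V → ℝ := fun v => max (-(z v - c)) 0 with hpm
  have hsuppp : C.filter (fun v => pp v ≠ 0) = C.filter (fun w => c < z w) := by
    apply Finset.filter_congr
    intro v _
    constructor
    · intro h
      by_contra hh
      push_neg at hh
      exact h (max_eq_right (by linarith : z v - c ≤ 0))
    · intro h hh
      have h2 : z v - c ≤ 0 := by
        calc z v - c ≤ pp v := le_max_left _ _
          _ = 0 := hh
      linarith
  have hsuppm : C.filter (fun v => pm v ≠ 0) = C.filter (fun w => z w < c) := by
    apply Finset.filter_congr
    intro v _
    constructor
    · intro h
      by_contra hh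
      push_neg at hh
      exact h (max_eq_right (by linarith : -(z v - c) ≤ 0))
    · intro h hh
      have h2 : -(z v - c) ≤ 0 := by
        calc -(z v - c) ≤ pm v := le_max_left _ _
          _ = 0 := hh
      linarith
  have hp1 := cheeger_fn C B d φ hB01 hBsymm hBd hd hφ hcond pp
    (fun v => le_max_right _ _) (by rw [hsuppp]; exact hprop1)
  have hp2 := cheeger_fn C B d φ hB01 hBsymm hBd hd hφ hcond pm
    (fun v => le_max_right _ _) (by rw [hsuppm]; exact hprop2)
  -- numerator comparison
  have hnum : (∑ v ∈ C, ∑ w ∈ C, B v w * (pp v - pp w) ^ 2)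
      + (∑ v ∈ C, ∑ w ∈ C, B v w * (pm v - pm w) ^ 2)
      ≤ ∑ v ∈ C, ∑ w ∈ C, B v w * (z v - z w) ^ 2 := by
    rw [← Finset.sum_add_distrib]
    refine Finset.sum_le_sum fun v _ => ?_
    rw [← Finset.sum_add_distrib]
    refine Finset.sum_le_sum fun w _ => ?_
    rw [← mul_add]
    have key : (pp v - pp w) ^ 2 + (pm v - pm w) ^ 2 ≤ (z v - z w) ^ 2 := by
      have := max_sq_ineq (z v - c) (z w - c)
      rw [hpp, hpm]
      calc (max (z v - c) 0 - max (z w - c) 0) ^ 2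
            + (max (-(z v - c)) 0 - max (-(z w - c)) 0) ^ 2
          ≤ ((z v - c) - (z w - c)) ^ 2 := this
        _ = (z v - z w) ^ 2 := by ring_nf
    exact mul_le_mul_of_nonneg_left key (hB0 v w)
  -- denominator comparison
  have hden : (∑ v ∈ C, d v * z v ^ 2)
      ≤ (∑ v ∈ C, d v * pp v ^ 2) + ∑ v ∈ C, d v * pm v ^ 2 := by
    have e1 : (∑ v ∈ C, d v * pp v ^ 2) + (∑ v ∈ C, d v * pm v ^ 2)
        = ∑ v ∈ C, d v * (z v - c) ^ 2 := by
      rw [← Finset.sum_add_distrib]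
      refine Finset.sum_congr rfl fun v _ => ?_
      rw [hpp, hpm, ← mul_add, max_sq_decomp]
    have e2 : (∑ v ∈ C, d v * (z v - c) ^ 2)
        = (∑ v ∈ C, d v * z v ^ 2) - 2 * c * (∑ v ∈ C, d v * z v)
          + c ^ 2 * ∑ v ∈ C, d v := by
      rw [Finset.mul_sum, Finset.mul_sum, ← Finset.sum_sub_distrib, ← Finset.sum_add_distrib]
      exact Finset.sum_congr rfl fun v _ => by ring
    rw [e1, e2, hz]
    nlinarith [sq_nonneg c, hvolC, mul_nonneg (sq_nonneg c) hvolC]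
  calc φ ^ 2 * (∑ v ∈ C, d v * z v ^ 2)
      ≤ φ ^ 2 * ((∑ v ∈ C, d v * pp v ^ 2) + ∑ v ∈ C, d v * pm v ^ 2) :=
        mul_le_mul_of_nonneg_left hden (sq_nonneg φ)
    _ = φ ^ 2 * (∑ v ∈ C, d v * pp v ^ 2) + φ ^ 2 * (∑ v ∈ C, d v * pm v ^ 2) := by ring
    _ ≤ _ := by linarith [hp1, hp2, hnum]
end lemB

section graph
variable {V : Type*} [Fintype V] [DecidableEq V]

variable (G : SimpleGraph V) [DecidableRel G.Adj]

lemma degree_eq_sum_ind (v : V) :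
    (G.degree v : ℝ) = ∑ w, (if G.Adj v w then (1:ℝ) else 0) := by
  rw [SimpleGraph.degree, Finset.sum_boole]
  simp [SimpleGraph.neighborFinset]

lemma intCond_cond (C : Finset V) (φ : ℝ) (hφ : 0 ≤ φ)
    (hcl : φ ≤ intConductance G C) :
    ∀ S ⊆ C, 2 * (∑ v ∈ S, (G.degree v : ℝ)) ≤ ∑ v ∈ C, (G.degree v : ℝ) →
      φ * (∑ v ∈ S, (G.degree v : ℝ)) ≤
        ∑ v ∈ S, ∑ w ∈ C \ S, (if G.Adj v w then (1:ℝ) else 0) := by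
  intro S hSC hvol
  have he0 : (0:ℝ) ≤ ∑ v ∈ S, ∑ w ∈ C \ S, (if G.Adj v w then (1:ℝ) else 0) :=
    Finset.sum_nonneg fun v _ => Finset.sum_nonneg fun w _ => by positivity
  have hvS0 : (0:ℝ) ≤ ∑ v ∈ S, (G.degree v : ℝ) :=
    Finset.sum_nonneg fun v _ => by positivity
  rcases eq_or_lt_of_le hvS0 with hz | hpos
  · rw [← hz]; simpa using he0
  · -- vol S > 0
    by_cases hcard : C.card ≤ 1
    · exfalso
      have hSne : S.Nonempty := by
        by_contra h
        rw [not_nonempty_iff_eq_empty] at h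
        rw [h] at hpos; simp at hpos
      have hSC' : S = C := Finset.eq_of_subset_of_card_le hSC
        (le_trans hcard (Finset.card_pos.mpr hSne))
      rw [hSC'] at hpos hvol
      linarith
    · rw [intConductance, if_neg hcard] at hcl
      set X := {x : ℝ | ∃ S ⊆ C, 0 < (∑ v ∈ S, (G.degree v : ℝ)) ∧
        2 * (∑ v ∈ S, (G.degree v : ℝ)) ≤ (∑ v ∈ C, (G.degree v : ℝ)) ∧
        x = (∑ v ∈ S, ∑ w ∈ C \ S, if G.Adj v w then (1 : ℝ) else 0) /
              (∑ v ∈ S, (G.degree v : ℝ))} with hX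
      have hmem : ((∑ v ∈ S, ∑ w ∈ C \ S, if G.Adj v w then (1:ℝ) else 0) /
          (∑ v ∈ S, (G.degree v : ℝ))) ∈ X := ⟨S, hSC, hpos, hvol, rfl⟩
      have hbdd : BddBelow X := by
        refine ⟨0, fun y hy => ?_⟩
        obtain ⟨S', _, hp, _, hy⟩ := hy
        rw [hy]
        apply div_nonneg _ hp.le
        exact Finset.sum_nonneg fun v _ => Finset.sum_nonneg fun w _ => by positivity
      have := le_trans hcl (csInf_le hbdd hmem)
      rw [le_div_iff₀ hpos] at this
      linarith
end graph

section graph2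
variable {V : Type*} [Fintype V] [DecidableEq V]
variable (G : SimpleGraph V) [DecidableRel G.Adj]

lemma intCond_le_one (C : Finset V) : intConductance G C ≤ 1 := by
  rw [intConductance]
  split
  · exact le_refl 1
  · 
    set X := {x : ℝ | ∃ S ⊆ C, 0 < (∑ v ∈ S, (G.degree v : ℝ)) ∧
      2 * (∑ v ∈ S, (G.degree v : ℝ)) ≤ (∑ v ∈ C, (G.degree v : ℝ)) ∧
      x = (∑ v ∈ S, ∑ w ∈ C \ S, if G.Adj v w then (1 : ℝ) else 0) /
            (∑ v ∈ S, (G.degree v : ℝ))} with hX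
    rcases Set.eq_empty_or_nonempty X with hXe | hXne
    · rw [hXe, Real.sInf_empty]; norm_num
    · obtain ⟨x, hx⟩ := hXne
      have hbdd : BddBelow X := by
        refine ⟨0, fun y hy => ?_⟩
        obtain ⟨S', _, hp, _, hy⟩ := hy
        rw [hy]
        apply div_nonneg _ hp.le
        exact Finset.sum_nonneg fun v _ => Finset.sum_nonneg fun w _ => by positivity
      refine le_trans (csInf_le hbdd hx) ?_
      obtain ⟨S, hSC, hp, _, hxeq⟩ := hx
      rw [hxeq, div_le_one hp]
      refine Finset.sum_le_sum fun v _ => ?_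
      rw [degree_eq_sum_ind G v]
      refine Finset.sum_le_sum_of_subset_of_nonneg (Finset.subset_univ _)
        fun w _ _ => by positivity
end graph2

section lemC
open Matrix
variable {V : Type*} [Fintype V] [DecidableEq V]

variable (G : SimpleGraph V) [DecidableRel G.Adj]

lemma rayleigh_bound (k : ℕ) (φ : ℝ) (hφ : 0 ≤ φ) (hφ1 : φ ≤ 1) (c : V → Fin k)
    (hclust : ∀ i : Fin k, φ ≤ intConductance G (Finset.univ.filter fun v => c v = i))
    (x : V → ℝ)
    (horth : ∀ i : Fin k, ∑ v ∈ Finset.univ.filter (fun v => c v = i),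
      Real.sqrt (G.degree v) * x v = 0) :
    φ ^ 2 / 2 * (∑ v, x v ^ 2) ≤ x ⬝ᵥ (normLap G *ᵥ x) := by
  classical
  set d : V → ℝ := fun v => (G.degree v : ℝ) with hd_def
  set B : V → V → ℝ := fun v w => if G.Adj v w then (1:ℝ) else 0 with hB_def
  have hd : ∀ v, 0 ≤ d v := fun v => by rw [hd_def]; positivity
  have hB01 : ∀ v w, B v w = 0 ∨ B v w = 1 := by
    intro v w; rw [hB_def]; dsimp only; split <;> simp
  have hBsymm : ∀ v w, B v w = B w v := by
    intro v w; rw [hB_def]; simp only [G.adj_comm]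
  have hdeg : ∀ v, d v = ∑ w, B v w := fun v => degree_eq_sum_ind G v
  set z : V → ℝ := fun v => (Real.sqrt (d v))⁻¹ * x v with hz_def
  have hdz : ∀ v, d v * z v = Real.sqrt (d v) * x v := by
    intro v
    rw [hz_def]
    rcases eq_or_lt_of_le (hd v) with h0 | hpos
    · rw [← h0]; simp
    · have hs : Real.sqrt (d v) ≠ 0 := Real.sqrt_ne_zero'.mpr hpos
      have h2 : Real.sqrt (d v) * Real.sqrt (d v) = d v := Real.mul_self_sqrt (hd v)
      field_simp
      linear_combination (-(x v)) * h2
  have hdz2 : ∀ v, d v * z v ^ 2 = if d v = 0 then 0 else x v ^ 2 := by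
    intro v
    rw [hz_def]
    split
    · next h0 => rw [h0]; dsimp only; rw [h0]; ring
    · next h0 =>
      have hpos : 0 < d v := lt_of_le_of_ne (hd v) (Ne.symm h0)
      have hsq : ((Real.sqrt (d v))⁻¹) ^ 2 = (d v)⁻¹ := by
        rw [← Real.sqrt_inv, Real.sq_sqrt (inv_nonneg.mpr (hd v))]
      have step : d v * ((Real.sqrt (d v))⁻¹ * x v) ^ 2 = d v * (d v)⁻¹ * x v ^ 2 := by
        rw [mul_pow, hsq]; ring
      dsimp only
      rw [step, mul_inv_cancel₀ (ne_of_gt hpos), one_mul]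
  -- quadratic form identity
  have hquad : x ⬝ᵥ (normLap G *ᵥ x)
      = (∑ v, (x v ^ 2 - d v * z v ^ 2)) + (∑ v, d v * z v ^ 2)
        - ∑ v, ∑ w, z v * B v w * z w := by
    rw [dotProduct]
    have hLx : ∀ v, (normLap G *ᵥ x) v
        = x v - ∑ w, ((Real.sqrt (d v))⁻¹ * B v w * (Real.sqrt (d w))⁻¹) * x w := by
      intro v
      rw [Matrix.mulVec, dotProduct]
      rw [normLap]
      simp only [Matrix.sub_apply, Matrix.one_apply, Matrix.mul_diagonal, Matrix.diagonal_mul,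
        SimpleGraph.adjMatrix_apply, sub_mul]
      rw [Finset.sum_sub_distrib]
      congr 1
      simp [Finset.sum_ite_eq', mul_comm]
    have e1 : ∀ v, x v * (normLap G *ᵥ x) v
        = x v ^ 2 - ∑ w, z v * B v w * z w := by
      intro v
      rw [hLx, mul_sub, Finset.mul_sum]
      congr 1
      · ring
      · refine Finset.sum_congr rfl fun w _ => ?_
        rw [hz_def]; ring
    rw [Finset.sum_congr rfl fun v _ => e1 v]
    simp only [Finset.sum_sub_distrib]
    ring
  -- Dirichlet identity
  have hdir : (∑ v, ∑ w, B v w * (z v - z w) ^ 2)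
      = 2 * (∑ v, d v * z v ^ 2) - 2 * ∑ v, ∑ w, z v * B v w * z w := by
    have expand : ∀ v w, B v w * (z v - z w) ^ 2
        = B v w * z v ^ 2 + B v w * z w ^ 2 - 2 * (z v * B v w * z w) := by
      intro v w; ring
    simp only [expand, Finset.sum_sub_distrib, Finset.sum_add_distrib]
    have t1 : (∑ v, ∑ w, B v w * z v ^ 2) = ∑ v, d v * z v ^ 2 := by
      refine Finset.sum_congr rfl fun v _ => ?_
      rw [← Finset.sum_mul, ← hdeg v]
    have t2 : (∑ v, ∑ w, B v w * z w ^ 2) = ∑ v, d v * z v ^ 2 := by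
      rw [Finset.sum_comm]
      refine Finset.sum_congr rfl fun w _ => ?_
      rw [← Finset.sum_mul]
      have : (∑ v, B v w) = d w := by
        rw [hdeg w]
        exact Finset.sum_congr rfl fun v _ => hBsymm v w
      rw [this]
    have t3 : (∑ v, ∑ w, 2 * (z v * B v w * z w)) = 2 * ∑ v, ∑ w, z v * B v w * z w := by
      rw [Finset.mul_sum]
      refine Finset.sum_congr rfl fun v _ => ?_
      rw [Finset.mul_sum]
    rw [t1, t2, t3]; ring
  -- per-part bounds summed
  have hparts : φ ^ 2 * (∑ v, d v * z v ^ 2) ≤ ∑ v, ∑ w, B v w * (z v - z w) ^ 2 := by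
    have hper : ∀ i : Fin k,
        φ ^ 2 * (∑ v ∈ Finset.univ.filter (fun v => c v = i), d v * z v ^ 2)
        ≤ ∑ v ∈ Finset.univ.filter (fun v => c v = i),
            ∑ w ∈ Finset.univ.filter (fun v => c v = i), B v w * (z v - z w) ^ 2 := by
      intro i
      set C := Finset.univ.filter (fun v => c v = i) with hC
      apply cheeger_part C B d φ hB01 hBsymm
      · intro v
        rw [hdeg v]
        exact Finset.sum_le_sum_of_subset_of_nonneg (Finset.subset_univ _)
          (fun w _ _ => by rcases hB01 v w with h | h <;> rw [h] <;> norm_num)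
      · exact hd
      · exact hφ
      · exact intCond_cond G C φ hφ (hclust i)
      · rw [← horth i]
        exact Finset.sum_congr rfl fun v _ => hdz v
    have hsum1 : (∑ i : Fin k, ∑ v ∈ Finset.univ.filter (fun v => c v = i), d v * z v ^ 2)
        = ∑ v, d v * z v ^ 2 := Finset.sum_fiberwise _ _ _
    have hsum2 : (∑ i : Fin k, ∑ v ∈ Finset.univ.filter (fun v => c v = i),
          ∑ w ∈ Finset.univ.filter (fun v => c v = i), B v w * (z v - z w) ^ 2)
        ≤ ∑ v, ∑ w, B v w * (z v - z w) ^ 2 := by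
      have step : (∑ i : Fin k, ∑ v ∈ Finset.univ.filter (fun v => c v = i),
            ∑ w ∈ Finset.univ.filter (fun v => c v = i), B v w * (z v - z w) ^ 2)
          = ∑ v, ∑ w ∈ Finset.univ.filter (fun w => c w = c v), B v w * (z v - z w) ^ 2 := by
        rw [← Finset.sum_fiberwise Finset.univ c
          (fun v => ∑ w ∈ Finset.univ.filter (fun w => c w = c v), B v w * (z v - z w) ^ 2)]
        refine Finset.sum_congr rfl fun i _ => Finset.sum_congr rfl fun v hv => ?_
        have : c v = i := (Finset.mem_filter.mp hv).2
        rw [this]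
      rw [step]
      refine Finset.sum_le_sum fun v _ => ?_
      refine Finset.sum_le_sum_of_subset_of_nonneg (Finset.subset_univ _) fun w _ _ => ?_
      rcases hB01 v w with h | h <;> rw [h]
      · simp
      · positivity
    calc φ ^ 2 * (∑ v, d v * z v ^ 2)
        = ∑ i : Fin k, φ ^ 2 * (∑ v ∈ Finset.univ.filter (fun v => c v = i), d v * z v ^ 2) := by
          rw [← Finset.mul_sum, hsum1]
      _ ≤ ∑ i : Fin k, ∑ v ∈ Finset.univ.filter (fun v => c v = i),
            ∑ w ∈ Finset.univ.filter (fun v => c v = i), B v w * (z v - z w) ^ 2 :=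
          Finset.sum_le_sum fun i _ => hper i
      _ ≤ _ := hsum2
  -- assemble
  have hE0 : 0 ≤ ∑ v, (x v ^ 2 - d v * z v ^ 2) := by
    refine Finset.sum_nonneg fun v _ => ?_
    rw [hdz2 v]
    split
    · simpa using sq_nonneg (x v)
    · simp
  have hxsplit : (∑ v, x v ^ 2) = (∑ v, (x v ^ 2 - d v * z v ^ 2)) + ∑ v, d v * z v ^ 2 := by
    rw [← Finset.sum_add_distrib]
    exact Finset.sum_congr rfl fun v _ => by ring
  have hDz0 : 0 ≤ ∑ v, d v * z v ^ 2 :=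
    Finset.sum_nonneg fun v _ => mul_nonneg (hd v) (sq_nonneg _)
  rw [hquad, hxsplit]
  have hφ2 : φ ^ 2 ≤ 1 := by nlinarith
  nlinarith [hparts, hdir, hE0]
end lemC

section lemD
variable {V : Type*} [Fintype V] [DecidableEq V]

lemma eig_lower_bound (L : Matrix V V ℝ) (hL : L.IsHermitian) (k : ℕ)
    (hk : k < Fintype.card V) (g : Fin k → V → ℝ) (cst : ℝ)
    (hyp : ∀ x : V → ℝ, (∀ i : Fin k, ∑ v, g i v * x v = 0) →
      cst * (∑ v, x v ^ 2) ≤ x ⬝ᵥ (L *ᵥ x)) :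
    cst ≤ muSmallest L (k + 1) := by
  classical
  set l : List ℝ := sortedEigs L with hl
  have hleig : l = (Finset.univ.val.map hL.eigenvalues).sort (· ≤ ·) := by
    rw [hl, sortedEigs, dif_pos hL]
  have hlen : l.length = Fintype.card V := by
    rw [hleig, Multiset.length_sort, Multiset.card_map]
    rfl
  have hklen : k < l.length := by rw [hlen]; exact hk
  set t : ℝ := l.get ⟨k, hklen⟩ with ht
  have hmu : muSmallest L (k + 1) = t := by
    rw [muSmallest, Nat.add_sub_cancel, ← hl, List.getD_eq_getElem l 0 hklen]
    rfl
  -- counting: at least k+1 eigenvalues are ≤ t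
  set J : Finset V := univ.filter (fun j => hL.eigenvalues j ≤ t) with hJ
  have hJcard : k + 1 ≤ J.card := by
    have hsorted : l.Pairwise (· ≤ ·) := by rw [hleig]; exact Multiset.pairwise_sort _ _
    have h1 : k + 1 ≤ l.countP (fun x => decide (x ≤ t)) := by
      have htake : (l.take (k + 1)).countP (fun x => decide (x ≤ t)) = k + 1 := by
        rw [List.countP_eq_length.mpr, List.length_take]
        · omega
        · intro a ha
          obtain ⟨i, hi, hget⟩ := List.mem_take_iff_getElem.mp ha
          simp only [decide_eq_true_eq]
          rw [← hget]
          have hik : i ≤ k := by omega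
          have := hsorted.rel_get_of_le
            (a := ⟨i, by omega⟩) (b := ⟨k, hklen⟩) (by simpa using hik)
          simpa [ht] using this
      calc k + 1 = (l.take (k+1)).countP (fun x => decide (x ≤ t)) := htake.symm
        _ ≤ l.countP (fun x => decide (x ≤ t)) := (List.take_sublist _ _).countP_le
    have h2 : l.countP (fun x => decide (x ≤ t))
        = Multiset.countP (fun x => decide (x ≤ t)) (Finset.univ.val.map hL.eigenvalues) := by
      rw [← Multiset.coe_countP, hleig, Multiset.sort_eq]
      simp
    have h3 : Multiset.countP (fun x => decide (x ≤ t)) (Finset.univ.val.map hL.eigenvalues)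
        = J.card := by
      rw [Multiset.countP_map]
      rw [hJ, Finset.card_filter]
      simp [Multiset.countP_eq_card_filter]
      rfl
    omega
  -- eigenvector basis
  set u := hL.eigenvectorBasis with hu
  have hortho : ∀ j j' : V, (∑ v, u j v * u j' v) = if j = j' then 1 else 0 := by
    intro j j'
    have := orthonormal_iff_ite.mp u.orthonormal j j'
    rw [← this]
    rw [PiLp.inner_apply]
    simp [RCLike.inner_apply, mul_comm]
  have heig : ∀ j : V, ∀ v : V, (L *ᵥ ⇑(u j)) v = hL.eigenvalues j * u j v := by
    intro j v
    have := hL.mulVec_eigenvectorBasis j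
    rw [hu, this]
    simp
  -- find a nonzero kernel element
  set M : Matrix (Fin k) {j // j ∈ J} ℝ := Matrix.of (fun i j => ∑ v, g i v * u (j : V) v)
    with hM
  have hkn : ∃ a : {j // j ∈ J} → ℝ, a ≠ 0 ∧ M *ᵥ a = 0 := by
    by_contra hcon
    push_neg at hcon
    have hinj : LinearMap.ker M.mulVecLin = ⊥ := by
      rw [LinearMap.ker_eq_bot']
      intro a ha
      by_contra hne
      exact hcon a hne (by rwa [M.mulVecLin_apply] at ha)
    have := M.mulVecLin.finrank_range_add_finrank_ker
    rw [hinj, finrank_bot, add_zero] at this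
    have h1 : Module.finrank ℝ (LinearMap.range M.mulVecLin) ≤ k := by
      calc Module.finrank ℝ (LinearMap.range M.mulVecLin)
          ≤ Module.finrank ℝ (Fin k → ℝ) := Submodule.finrank_le _
        _ = k := by simp
    rw [Module.finrank_pi] at this
    have h2 : Fintype.card {j // j ∈ J} = J.card := Fintype.card_coe J
    omega
  obtain ⟨a, ha0, haker⟩ := hkn
  -- the test vector
  set x : V → ℝ := fun v => ∑ j : {j // j ∈ J}, a j * u (j : V) v with hx
  have horthx : ∀ i : Fin k, ∑ v, g i v * x v = 0 := by
    intro i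
    have hMa : (∑ v, g i v * x v) = (M *ᵥ a) i := by
      rw [Matrix.mulVec, dotProduct]
      calc (∑ v, g i v * x v)
          = ∑ v, ∑ j : {j // j ∈ J}, g i v * (a j * u (j : V) v) := by
            refine Finset.sum_congr rfl fun v _ => ?_
            rw [hx]; dsimp only; rw [Finset.mul_sum]
        _ = ∑ j : {j // j ∈ J}, ∑ v, g i v * (a j * u (j : V) v) := Finset.sum_comm
        _ = ∑ j : {j // j ∈ J}, M i j * a j := by
            refine Finset.sum_congr rfl fun j _ => ?_
            rw [hM]; dsimp only [Matrix.of_apply]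
            rw [Finset.sum_mul]
            refine Finset.sum_congr rfl fun v _ => by ring
    rw [hMa, haker]
    rfl
  -- norms and Rayleigh quotient via orthonormality
  have hxsq : (∑ v, x v ^ 2) = ∑ j : {j // j ∈ J}, a j ^ 2 := by
    calc (∑ v, x v ^ 2)
        = ∑ v, ∑ j : {j // j ∈ J}, ∑ j' : {j // j ∈ J},
            (a j * a j') * (u (j : V) v * u (j' : V) v) := by
          refine Finset.sum_congr rfl fun v _ => ?_
          rw [hx]; dsimp only; rw [sq, Finset.sum_mul_sum]
          refine Finset.sum_congr rfl fun j _ => Finset.sum_congr rfl fun j' _ => by ring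
      _ = ∑ j : {j // j ∈ J}, ∑ j' : {j // j ∈ J},
            (a j * a j') * ∑ v, u (j : V) v * u (j' : V) v := by
          rw [Finset.sum_comm]
          refine Finset.sum_congr rfl fun j _ => ?_
          rw [Finset.sum_comm]
          refine Finset.sum_congr rfl fun j' _ => ?_
          rw [Finset.mul_sum]
      _ = ∑ j : {j // j ∈ J}, a j ^ 2 := by
          refine Finset.sum_congr rfl fun j _ => ?_
          rw [Finset.sum_eq_single j]
          · rw [hortho, if_pos rfl, mul_one, sq]
          · intro j' _ hne
            rw [hortho]
            have hne' : (j : V) ≠ (j' : V) := fun h => hne (Subtype.ext h.symm)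
            rw [if_neg hne', mul_zero]
          · intro h
            exact absurd (Finset.mem_univ j) h
  have hLx : ∀ v, (L *ᵥ x) v = ∑ j : {j // j ∈ J}, a j * (hL.eigenvalues (j : V) * u (j : V) v) := by
    intro v
    rw [Matrix.mulVec, dotProduct]
    calc (∑ w, L v w * x w)
        = ∑ w, ∑ j : {j // j ∈ J}, a j * (L v w * u (j : V) w) := by
          refine Finset.sum_congr rfl fun w _ => ?_
          rw [hx]; dsimp only; rw [Finset.mul_sum]
          refine Finset.sum_congr rfl fun j _ => by ring
      _ = ∑ j : {j // j ∈ J}, a j * ∑ w, L v w * u (j : V) w := by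
          rw [Finset.sum_comm]
          refine Finset.sum_congr rfl fun j _ => ?_
          rw [Finset.mul_sum]
      _ = _ := by
          refine Finset.sum_congr rfl fun j _ => ?_
          congr 1
          have := heig (j : V) v
          rw [← this]
          rw [Matrix.mulVec, dotProduct]
  have hray : x ⬝ᵥ (L *ᵥ x) = ∑ j : {j // j ∈ J}, hL.eigenvalues (j : V) * a j ^ 2 := by
    rw [dotProduct]
    calc (∑ v, x v * (L *ᵥ x) v)
        = ∑ v, ∑ j : {j // j ∈ J}, ∑ j' : {j // j ∈ J},
            (a j * (a j' * hL.eigenvalues (j' : V))) * (u (j : V) v * u (j' : V) v) := by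
          refine Finset.sum_congr rfl fun v _ => ?_
          rw [hx, hLx v]; dsimp only
          rw [Finset.sum_mul_sum]
          refine Finset.sum_congr rfl fun j _ => Finset.sum_congr rfl fun j' _ => by ring
      _ = ∑ j : {j // j ∈ J}, ∑ j' : {j // j ∈ J},
            (a j * (a j' * hL.eigenvalues (j' : V))) * ∑ v, u (j : V) v * u (j' : V) v := by
          rw [Finset.sum_comm]
          refine Finset.sum_congr rfl fun j _ => ?_
          rw [Finset.sum_comm]
          refine Finset.sum_congr rfl fun j' _ => ?_
          rw [Finset.mul_sum]
      _ = _ := by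
          refine Finset.sum_congr rfl fun j _ => ?_
          rw [Finset.sum_eq_single j]
          · rw [hortho, if_pos rfl, mul_one, sq]
            ring
          · intro j' _ hne
            rw [hortho]
            have hne' : (j : V) ≠ (j' : V) := fun h => hne (Subtype.ext h.symm)
            rw [if_neg hne', mul_zero]
          · intro h
            exact absurd (Finset.mem_univ j) h
  -- conclude
  have hS : 0 < ∑ j : {j // j ∈ J}, a j ^ 2 := by
    obtain ⟨j, hj⟩ := Function.ne_iff.mp ha0
    refine Finset.sum_pos' (fun j _ => sq_nonneg _) ⟨j, Finset.mem_univ j, ?_⟩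
    have : a j ≠ 0 := hj
    positivity
  have hub : x ⬝ᵥ (L *ᵥ x) ≤ t * ∑ j : {j // j ∈ J}, a j ^ 2 := by
    rw [hray, Finset.mul_sum]
    refine Finset.sum_le_sum fun j _ => ?_
    have hje : hL.eigenvalues (j : V) ≤ t := (Finset.mem_filter.mp j.2).2
    exact mul_le_mul_of_nonneg_right hje (sq_nonneg _)
  have hlb := hyp x horthx
  rw [hxsq] at hlb
  rw [hmu]
  have := le_trans hlb hub
  exact le_of_mul_le_mul_right (by linarith [this]) hS
end lemD

end AUX

/-- If the vertex set of `G` can be partitioned into at most `k` parts each of internal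
conductance at least `φ`, then the `(k+1)`-st smallest eigenvalue of the normalized
Laplacian satisfies `λ_{k+1} ≥ φ²/2`. -/
theorem stmt8 {V : Type*} [Fintype V] [DecidableEq V]
    (G : SimpleGraph V) [DecidableRel G.Adj]
    (k : ℕ) (hk : k < Fintype.card V) (φ : ℝ) (hφ : 0 ≤ φ)
    (c : V → Fin k)
    (hclust : ∀ i : Fin k, φ ≤ intConductance G (Finset.univ.filter fun v => c v = i)) :
    φ ^ 2 / 2 ≤ muSmallest (normLap G) (k + 1) := by
  classical
  -- the normalized Laplacian is Hermitian
  have hAdj : (G.adjMatrix ℝ).IsHermitian := by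
    rw [Matrix.IsHermitian, Matrix.conjTranspose_eq_transpose_of_trivial]
    exact (SimpleGraph.isSymm_adjMatrix _)
  have hDiag : (Matrix.diagonal fun v => (Real.sqrt (G.degree v))⁻¹).IsHermitian :=
    Matrix.isHermitian_diagonal_iff.mpr (fun v => IsSelfAdjoint.all _)
  have hL : (normLap G).IsHermitian := by
    rw [normLap]
    refine Matrix.IsHermitian.sub Matrix.isHermitian_one ?_
    rw [Matrix.IsHermitian, Matrix.conjTranspose_mul, Matrix.conjTranspose_mul,
      hAdj, hDiag]
    rw [Matrix.mul_assoc]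
  -- φ ≤ 1
  have hVne : 0 < Fintype.card V := lt_of_le_of_lt (Nat.zero_le k) hk
  obtain ⟨v₀⟩ := Fintype.card_pos_iff.mp hVne
  have hφ1 : φ ≤ 1 :=
    le_trans (hclust (c v₀)) (intCond_le_one G _)
  -- the orthogonality test functions
  set g : Fin k → V → ℝ :=
    fun i v => if c v = i then Real.sqrt (G.degree v) else 0 with hg
  apply eig_lower_bound (normLap G) hL k hk g
  intro x horth
  apply rayleigh_bound G k φ hφ hφ1 c hclust x
  intro i
  have := horth i
  rw [← this]
  rw [Finset.sum_filter]
  refine Finset.sum_congr rfl fun v _ => ?_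
  rw [hg]
  dsimp only
  split <;> simp
end

section
/- Let M be a symmetric positive semidefinite n×n matrix with eigenvalues 1 ≥ μ₁ ≥ … ≥ μ_n ≥ 0 and orthonormal eigenvectors v₁,…,v_n. Suppose W ∈ ℝ^{n×m} is a matrix each of whose columns lies in the span of v₁,…,v_h. Then for any 1 ≤ j ≤ m, μ_j((MW)ᵀ(MW)) ≥ μ_h² · μ_j(WᵀW). -/
open Matrix

/-- `muLargest B j` is the `j`-th largest eigenvalue (1-indexed) of a symmetric
real matrix `B`. -/
noncomputable def muLargest {n : Type*} [Fintype n] [DecidableEq n]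
    (B : Matrix n n ℝ) (j : ℕ) : ℝ :=
  (sortedEigs B).getD (Fintype.card n - j) 0

section helpers

lemma sum_smul_dotProduct {N : Type*} [Fintype N] {ι : Type*} [Fintype ι]
    (w : ι → (N → ℝ)) (d : ι → ℝ) (u : N → ℝ) :
    (∑ i, d i • w i) ⬝ᵥ u = ∑ i, d i * (w i ⬝ᵥ u) := by
  simp only [dotProduct, Finset.sum_apply, Pi.smul_apply, smul_eq_mul,
    Finset.sum_mul, Finset.mul_sum]
  rw [Finset.sum_comm]
  exact Finset.sum_congr rfl fun i _ => Finset.sum_congr rfl fun x _ => by ring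

/-- dot product of two combinations of a dot-orthonormal family -/
lemma dot_sum_sum {N : Type*} [Fintype N] {ι : Type*} [Fintype ι] [DecidableEq ι]
    (w : ι → (N → ℝ)) (hw : ∀ i j, w i ⬝ᵥ w j = if i = j then (1:ℝ) else 0)
    (d e : ι → ℝ) :
    (∑ i, d i • w i) ⬝ᵥ (∑ i, e i • w i) = ∑ i, d i * e i := by
  rw [sum_smul_dotProduct]
  have : ∀ l, w l ⬝ᵥ (∑ i, e i • w i) = ∑ i, e i * (w l ⬝ᵥ w i) := by
    intro l
    simp only [dotProduct, Finset.sum_apply, Pi.smul_apply, smul_eq_mul,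
      Finset.mul_sum]
    rw [Finset.sum_comm]
    exact Finset.sum_congr rfl fun i _ => Finset.sum_congr rfl fun x _ => by ring
  simp only [this, hw, mul_ite, mul_one, mul_zero]
  simp [Finset.sum_ite_eq]

lemma linIndep_of_dot {N : Type*} [Fintype N] {ι : Type*} [Fintype ι] [DecidableEq ι]
    (w : ι → (N → ℝ)) (hw : ∀ i j, w i ⬝ᵥ w j = if i = j then (1:ℝ) else 0) :
    LinearIndependent ℝ w := by
  rw [Fintype.linearIndependent_iff]
  intro g hg i
  have h := congrArg (fun u => u ⬝ᵥ w i) hg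
  simp only [zero_dotProduct] at h
  rw [show ((∑ l, g l • w l) ⬝ᵥ w i : ℝ) = ∑ l, g l * (w l ⬝ᵥ w i) from
    sum_smul_dotProduct w g (w i), ] at h
  simp only [hw, mul_ite, mul_one, mul_zero, Finset.sum_ite_eq', Finset.mem_univ,
    if_true] at h
  exact h

lemma sortedEigs_eq {m : ℕ} {B : Matrix (Fin m) (Fin m) ℝ} (hB : B.IsHermitian) :
    sortedEigs B = List.ofFn (hB.eigenvalues ∘ Tuple.sort hB.eigenvalues) := by
  rw [sortedEigs, dif_pos hB]
  refine List.Perm.eq_of_pairwise' (Multiset.pairwise_sort _ _) ?_ ?_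
  rotate_left
  · rw [← Multiset.coe_eq_coe, Multiset.sort_eq, ← Fin.univ_val_map]
    have huniv : Finset.univ.val.map ⇑(Tuple.sort hB.eigenvalues) = Finset.univ.val := by
      rw [show (Finset.univ.val.map ⇑(Tuple.sort hB.eigenvalues) : Multiset (Fin m))
        = (Finset.univ.map (Tuple.sort hB.eigenvalues).toEmbedding).val from rfl,
        Finset.map_univ_equiv]
    calc Finset.univ.val.map hB.eigenvalues
        = (Finset.univ.val.map ⇑(Tuple.sort hB.eigenvalues)).map hB.eigenvalues := by
          rw [huniv]
      _ = Finset.univ.val.map (hB.eigenvalues ∘ ⇑(Tuple.sort hB.eigenvalues)) :=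
          Multiset.map_map _ _ _
  · exact (List.sortedLE_ofFn_iff.mpr (Tuple.monotone_sort hB.eigenvalues)).pairwise

lemma muLargest_eq {m : ℕ} {B : Matrix (Fin m) (Fin m) ℝ} (hB : B.IsHermitian)
    (j : ℕ) (hj1 : 1 ≤ j) (hjm : j ≤ m) :
    muLargest B j = hB.eigenvalues (Tuple.sort hB.eigenvalues ⟨m - j, by omega⟩) := by
  rw [muLargest, sortedEigs_eq hB, Fintype.card_fin]
  rw [List.getD_eq_getElem _ _ (by rw [List.length_ofFn]; omega)]
  simp [List.getElem_ofFn]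

set_option maxHeartbeats 1000000 in
lemma key_mono {m : ℕ} (A B : Matrix (Fin m) (Fin m) ℝ)
    (hA : A.IsHermitian) (hB : B.IsHermitian)
    (c : ℝ) (hc : 0 ≤ c)
    (hAB : ∀ x : Fin m → ℝ, c * (x ⬝ᵥ B *ᵥ x) ≤ x ⬝ᵥ A *ᵥ x)
    (j : ℕ) (hj1 : 1 ≤ j) (hjm : j ≤ m) :
    c * muLargest B j ≤ muLargest A j := by
  have hkm : m - j < m := by omega
  set k := m - j with hk
  set σ := Tuple.sort hB.eigenvalues with hσ
  set τ := Tuple.sort hA.eigenvalues with hτ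
  rw [muLargest_eq hB j hj1 hjm, muLargest_eq hA j hj1 hjm]
  -- orthonormal eigenvector families
  have horthB : ∀ i l : Fin m,
      (⇑(hB.eigenvectorBasis i) : Fin m → ℝ) ⬝ᵥ ⇑(hB.eigenvectorBasis l)
        = if i = l then (1:ℝ) else 0 := by
    intro i l
    have := orthonormal_iff_ite.mp hB.eigenvectorBasis.orthonormal i l
    rw [EuclideanSpace.inner_eq_star_dotProduct] at this
    rw [dotProduct_comm]; simpa using this
  have horthA : ∀ i l : Fin m,
      (⇑(hA.eigenvectorBasis i) : Fin m → ℝ) ⬝ᵥ ⇑(hA.eigenvectorBasis l)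
        = if i = l then (1:ℝ) else 0 := by
    intro i l
    have := orthonormal_iff_ite.mp hA.eigenvectorBasis.orthonormal i l
    rw [EuclideanSpace.inner_eq_star_dotProduct] at this
    rw [dotProduct_comm]; simpa using this
  -- the two families
  set fB : Fin (m - k) → (Fin m → ℝ) :=
    fun i => ⇑(hB.eigenvectorBasis (σ ⟨k + i, by omega⟩)) with hfBdef
  set fA : Fin (k + 1) → (Fin m → ℝ) :=
    fun i => ⇑(hA.eigenvectorBasis (τ ⟨i, by omega⟩)) with hfAdef
  have hfB : ∀ i l, fB i ⬝ᵥ fB l = if i = l then (1:ℝ) else 0 := by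
    intro i l
    rw [hfBdef]; dsimp only; rw [horthB]
    congr 1
    simp only [EmbeddingLike.apply_eq_iff_eq, Fin.mk.injEq, eq_iff_iff]
    constructor
    · intro hh; exact Fin.ext (by omega)
    · intro hh; rw [hh]
  have hfA : ∀ i l, fA i ⬝ᵥ fA l = if i = l then (1:ℝ) else 0 := by
    intro i l
    rw [hfAdef]; dsimp only; rw [horthA]
    congr 1
    simp only [EmbeddingLike.apply_eq_iff_eq, Fin.mk.injEq, eq_iff_iff]
    constructor
    · intro hh; exact Fin.ext (by omega)
    · intro hh; rw [hh]
  set S := Submodule.span ℝ (Set.range fB) with hS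
  set T := Submodule.span ℝ (Set.range fA) with hT
  have hdimS : Module.finrank ℝ S = m - k := by
    rw [hS, finrank_span_eq_card (linIndep_of_dot fB hfB), Fintype.card_fin]
  have hdimT : Module.finrank ℝ T = k + 1 := by
    rw [hT, finrank_span_eq_card (linIndep_of_dot fA hfA), Fintype.card_fin]
  have hsum := Submodule.finrank_sup_add_finrank_inf_eq S T
  have hsup : Module.finrank ℝ ↥(S ⊔ T) ≤ m := by
    refine le_trans (Submodule.finrank_le _) ?_
    rw [Module.finrank_fintype_fun_eq_card, Fintype.card_fin]
  have hinf : 0 < Module.finrank ℝ ↥(S ⊓ T) := by omega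
  obtain ⟨x0, hx0⟩ := Module.finrank_pos_iff_exists_ne_zero.mp hinf
  obtain ⟨y, hxne, hxS, hxT⟩ : ∃ y : Fin m → ℝ, y ≠ 0 ∧ y ∈ S ∧ y ∈ T :=
    ⟨↑x0, fun hcon => hx0 (Subtype.ext hcon), x0.2.1, x0.2.2⟩
  obtain ⟨d, hd⟩ := (Submodule.mem_span_range_iff_exists_fun ℝ).mp hxS
  obtain ⟨e, he⟩ := (Submodule.mem_span_range_iff_exists_fun ℝ).mp hxT
  -- eigen equations
  have heigB : ∀ i : Fin (m - k), B *ᵥ fB i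
      = hB.eigenvalues (σ ⟨k + i, by omega⟩) • fB i := fun i =>
    hB.mulVec_eigenvectorBasis _
  have heigA : ∀ i : Fin (k + 1), A *ᵥ fA i
      = hA.eigenvalues (τ ⟨i, by omega⟩) • fA i := fun i =>
    hA.mulVec_eigenvectorBasis _
  -- quadratic forms
  have hyB : B *ᵥ y = ∑ i : Fin (m - k),
      (hB.eigenvalues (σ ⟨k + (i : ℕ), by omega⟩) * d i) • fB i := by
    rw [← hd, ← Matrix.mulVecLin_apply, map_sum]
    refine Finset.sum_congr rfl fun i _ => ?_
    rw [_root_.map_smul, Matrix.mulVecLin_apply, heigB i, smul_smul, mul_comm]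
  have hyA : A *ᵥ y = ∑ i : Fin (k + 1),
      (hA.eigenvalues (τ ⟨(i : ℕ), by omega⟩) * e i) • fA i := by
    rw [← he, ← Matrix.mulVecLin_apply, map_sum]
    refine Finset.sum_congr rfl fun i _ => ?_
    rw [_root_.map_smul, Matrix.mulVecLin_apply, heigA i, smul_smul, mul_comm]
  have hyy : y ⬝ᵥ y = ∑ i, d i * d i := by
    rw [← hd, dot_sum_sum fB hfB]
  have hyy' : y ⬝ᵥ y = ∑ i, e i * e i := by
    rw [← he, dot_sum_sum fA hfA]
  have hqB : y ⬝ᵥ B *ᵥ y = ∑ i : Fin (m - k),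
      hB.eigenvalues (σ ⟨k + (i : ℕ), by omega⟩) * (d i * d i) := by
    rw [hyB]
    nth_rewrite 1 [← hd]
    rw [dot_sum_sum fB hfB]
    exact Finset.sum_congr rfl fun i _ => by ring
  have hqA : y ⬝ᵥ A *ᵥ y = ∑ i : Fin (k + 1),
      hA.eigenvalues (τ ⟨(i : ℕ), by omega⟩) * (e i * e i) := by
    rw [hyA]
    nth_rewrite 1 [← he]
    rw [dot_sum_sum fA hfA]
    exact Finset.sum_congr rfl fun i _ => by ring
  -- the two Rayleigh bounds
  have hmonB := Tuple.monotone_sort hB.eigenvalues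
  have hmonA := Tuple.monotone_sort hA.eigenvalues
  have hb : hB.eigenvalues (σ ⟨k, hkm⟩) * (y ⬝ᵥ y) ≤ y ⬝ᵥ B *ᵥ y := by
    rw [hqB, hyy, Finset.mul_sum]
    refine Finset.sum_le_sum fun i _ => ?_
    refine mul_le_mul_of_nonneg_right ?_ (mul_self_nonneg _)
    exact hmonB (Fin.mk_le_mk.mpr (by omega))
  have ha : y ⬝ᵥ A *ᵥ y ≤ hA.eigenvalues (τ ⟨k, hkm⟩) * (y ⬝ᵥ y) := by
    rw [hqA, hyy', Finset.mul_sum]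
    refine Finset.sum_le_sum fun i _ => ?_
    refine mul_le_mul_of_nonneg_right ?_ (mul_self_nonneg _)
    exact hmonA (Fin.mk_le_mk.mpr (by omega : (i:ℕ) ≤ k))
  have hypos : 0 < y ⬝ᵥ y := by
    rcases lt_or_eq_of_le (by rw [hyy]; exact Finset.sum_nonneg fun i _ => mul_self_nonneg _ : (0:ℝ) ≤ y ⬝ᵥ y) with h | h
    · exact h
    · exact absurd (dotProduct_self_eq_zero.mp h.symm) hxne
  have hfinal : (c * hB.eigenvalues (σ ⟨k, hkm⟩)) * (y ⬝ᵥ y)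
      ≤ hA.eigenvalues (τ ⟨k, hkm⟩) * (y ⬝ᵥ y) := by
    calc (c * hB.eigenvalues (σ ⟨k, hkm⟩)) * (y ⬝ᵥ y)
        = c * (hB.eigenvalues (σ ⟨k, hkm⟩) * (y ⬝ᵥ y)) := by ring
      _ ≤ c * (y ⬝ᵥ B *ᵥ y) := mul_le_mul_of_nonneg_left hb hc
      _ ≤ y ⬝ᵥ A *ᵥ y := hAB y
      _ ≤ hA.eigenvalues (τ ⟨k, hkm⟩) * (y ⬝ᵥ y) := ha
  exact le_of_mul_le_mul_right hfinal hypos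

end helpers

set_option maxHeartbeats 1000000 in
/-- Let `M` be a symmetric PSD `n×n` matrix with eigenvalues
`1 ≥ μ₁ ≥ … ≥ μ_n ≥ 0` and orthonormal eigenvectors `v₁, …, v_n`.  If every column of
`W` lies in the span of `v₁, …, v_h`, then for all `1 ≤ j ≤ m`,
`μ_j((MW)ᵀ(MW)) ≥ μ_h² · μ_j(WᵀW)`. -/
theorem stmt11 {n : ℕ} (M : Matrix (Fin n) (Fin n) ℝ) (hM : M.PosSemidef)
    (μ : Fin n → ℝ) (v : Fin n → (Fin n → ℝ))
    (hortho : ∀ i j, v i ⬝ᵥ v j = if i = j then (1 : ℝ) else 0)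
    (heig : ∀ i, M *ᵥ v i = μ i • v i)
    (hanti : ∀ i j : Fin n, i ≤ j → μ j ≤ μ i)
    (hle1 : ∀ i, μ i ≤ 1) (h0 : ∀ i, 0 ≤ μ i)
    (m h : ℕ) (hh1 : 1 ≤ h) (hhn : h ≤ n)
    (W : Matrix (Fin n) (Fin m) ℝ)
    (hW : ∀ j : Fin m, (fun i => W i j) ∈
      Submodule.span ℝ {x : Fin n → ℝ | ∃ i : Fin n, (i : ℕ) < h ∧ x = v i})
    (j : ℕ) (hj1 : 1 ≤ j) (hjm : j ≤ m) :
    (μ ⟨h - 1, by omega⟩) ^ 2 * muLargest (Wᵀ * W) j ≤ muLargest ((M * W)ᵀ * (M * W)) j := by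
  have hB : (Wᵀ * W).IsHermitian := by
    simpa using Matrix.isHermitian_conjTranspose_mul_self W
  have hA : ((M * W)ᵀ * (M * W)).IsHermitian := by
    simpa using Matrix.isHermitian_conjTranspose_mul_self (M * W)
  refine key_mono _ _ hA hB _ (sq_nonneg _) ?_ j hj1 hjm
  intro x
  -- rewrite both quadratic forms as norms
  have hqform : ∀ (V : Matrix (Fin n) (Fin m) ℝ),
      x ⬝ᵥ (Vᵀ * V) *ᵥ x = (V *ᵥ x) ⬝ᵥ (V *ᵥ x) := by
    intro V
    rw [← Matrix.mulVec_mulVec, Matrix.dotProduct_mulVec, Matrix.vecMul_transpose]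
  rw [hqform W, hqform (M * W), ← Matrix.mulVec_mulVec]
  set u : Fin n → ℝ := W *ᵥ x with hu
  -- u lies in the span of v_0, ..., v_{h-1}
  have hspan : u ∈ Submodule.span ℝ
      {x : Fin n → ℝ | ∃ i : Fin n, (i : ℕ) < h ∧ x = v i} := by
    have : u = ∑ l : Fin m, x l • (fun i => W i l) := by
      funext i
      rw [hu]
      simp [Matrix.mulVec, dotProduct, mul_comm]
    rw [this]
    exact Submodule.sum_mem _ fun l _ => Submodule.smul_mem _ _ (hW l)
  -- rewrite the span as a span of a range over a subtype
  have hset : {x : Fin n → ℝ | ∃ i : Fin n, (i : ℕ) < h ∧ x = v i}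
      = Set.range (fun p : {i : Fin n // (i : ℕ) < h} => v p) := by
    ext z
    constructor
    · rintro ⟨i, hi, rfl⟩; exact ⟨⟨i, hi⟩, rfl⟩
    · rintro ⟨⟨i, hi⟩, rfl⟩; exact ⟨i, hi, rfl⟩
  rw [hset] at hspan
  obtain ⟨b, hb⟩ := (Submodule.mem_span_range_iff_exists_fun ℝ).mp hspan
  set w : {i : Fin n // (i : ℕ) < h} → (Fin n → ℝ) := fun p => v p with hwdef
  have hworth : ∀ p q, w p ⬝ᵥ w q = if p = q then (1:ℝ) else 0 := by
    intro p q
    rw [hwdef]; dsimp only; rw [hortho]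
    congr 1
    simp [Subtype.ext_iff]
  have hMu : M *ᵥ u = ∑ p : {i : Fin n // (i : ℕ) < h}, (μ p.1 * b p) • w p := by
    rw [← hb, ← Matrix.mulVecLin_apply, map_sum]
    refine Finset.sum_congr rfl fun p _ => ?_
    rw [_root_.map_smul, Matrix.mulVecLin_apply, heig, smul_smul, mul_comm]
  have huu : u ⬝ᵥ u = ∑ p : {i : Fin n // (i : ℕ) < h}, b p * b p := by
    rw [← hb, dot_sum_sum w hworth]
  have hMuMu : (M *ᵥ u) ⬝ᵥ (M *ᵥ u)
      = ∑ p : {i : Fin n // (i : ℕ) < h}, (μ p.1 * b p) * (μ p.1 * b p) := by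
    rw [hMu, dot_sum_sum w hworth]
  rw [huu, hMuMu, Finset.mul_sum]
  refine Finset.sum_le_sum fun p _ => ?_
  have hple : p.1 ≤ (⟨h - 1, by omega⟩ : Fin n) := by
    have := p.2
    simp only [Fin.le_def]
    omega
  have hmu : μ ⟨h - 1, by omega⟩ ≤ μ p.1 := hanti p.1 ⟨h - 1, by omega⟩ hple
  calc (μ ⟨h - 1, by omega⟩) ^ 2 * (b p * b p)
      ≤ (μ p.1) ^ 2 * (b p * b p) :=
        mul_le_mul_of_nonneg_right (pow_le_pow_left₀ (h0 _) hmu 2) (mul_self_nonneg _)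
    _ = (μ p.1 * b p) * (μ p.1 * b p) := by ring
end

section
/- Let G = (V,E) be a d-regular φ-expander on n vertices, with each edge independently labeled 0 or 1 uniformly at random. Form the 2-lift G′ on vertex set V×{0,1} where each edge (u,v) with label 0 yields edges (u⁰,v⁰),(u¹,v¹) and each edge with label 1 yields edges (u⁰,v¹),(u¹,v⁰). Then with probability at least 1 − 2^{2n} e^{−dn/256}, every set C ⊆ V×{0,1} with |C| ≤ n has edge expansion at least min(φ/4, 1/32) in G′. -/
open scoped Classical

/-- The 2-lift of a graph `G` determined by an edge labelling `ℓ`: vertices `V × Bool`,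
and `(u,a)` is adjacent to `(v,b)` iff `G.Adj u v` and `a xor b = ℓ s(u,v)`. -/
def lift2 {V : Type*} (G : SimpleGraph V) (ℓ : Sym2 V → Bool) :
    SimpleGraph (V × Bool) where
  Adj p q := G.Adj p.1 q.1 ∧ xor p.2 q.2 = ℓ s(p.1, q.1)
  symm := by
    constructor
    intro p q h
    refine ⟨h.1.symm, ?_⟩
    rw [Bool.xor_comm, Sym2.eq_swap]
    exact h.2
  loopless := by
    constructor
    intro p h
    exact G.irrefl h.1

open Finset

section Aux

lemma one_add_exp_le' (l : ℝ) : 1 + Real.exp (-l) ≤ 2 * Real.exp (l^2/8 - l/2) := by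
  have h1 : 1 + Real.exp (-l) = 2 * Real.exp (-l/2) * Real.cosh (l/2) := by
    rw [Real.cosh_eq]
    have : Real.exp (-l/2) * Real.exp (l/2) = 1 := by
      rw [← Real.exp_add, show -l/2 + l/2 = 0 by ring, Real.exp_zero]
    have h2 : Real.exp (-l/2) * Real.exp (-(l/2)) = Real.exp (-l) := by
      rw [← Real.exp_add]; ring_nf
    nlinarith [this, h2]
  rw [h1]
  have hc : Real.cosh (l/2) ≤ Real.exp ((l/2)^2/2) := Real.cosh_le_exp_half_sq (l/2)
  calc 2 * Real.exp (-l/2) * Real.cosh (l/2)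
      ≤ 2 * Real.exp (-l/2) * Real.exp ((l/2)^2/2) := by
        have := Real.exp_pos (-l/2); nlinarith
    _ = 2 * Real.exp (l^2/8 - l/2) := by
        rw [mul_assoc, ← Real.exp_add]; ring_nf

lemma chernoff_count' {V : Type*} [Fintype V] [DecidableEq V]
    (E : Finset (Sym2 V)) (τ : Sym2 V → Bool) (t : ℝ) (ht : 0 ≤ t) (hE : 0 < E.card) :
    ((univ.filter (fun ℓ : Sym2 V → Bool =>
        (∑ e ∈ E, if ℓ e ≠ τ e then (1:ℝ) else 0) < E.card / 2 - t)).card : ℝ)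
      ≤ 2 ^ Fintype.card (Sym2 V) * Real.exp (-2 * t^2 / E.card) := by
  set m : ℝ := (E.card : ℝ) with hm
  have hm0 : 0 < m := by rw [hm]; exact_mod_cast hE
  set l : ℝ := 4 * t / m with hl
  have hl0 : 0 ≤ l := by positivity
  set X : (Sym2 V → Bool) → ℝ := fun ℓ => ∑ e ∈ E, if ℓ e ≠ τ e then (1:ℝ) else 0 with hX
  have step1 : ((univ.filter (fun ℓ : Sym2 V → Bool => X ℓ < m / 2 - t)).card : ℝ)
      ≤ ∑ ℓ : Sym2 V → Bool, Real.exp (l * (m/2 - t - X ℓ)) := by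
    rw [Finset.card_eq_sum_ones, Nat.cast_sum]
    refine le_trans (Finset.sum_le_sum ?_) (Finset.sum_le_sum_of_subset_of_nonneg
      (Finset.filter_subset _ _) (fun _ _ _ => (Real.exp_pos _).le))
    intro ℓ hℓ
    simp only [Finset.mem_filter] at hℓ
    have : 0 ≤ l * (m/2 - t - X ℓ) := by
      have := hℓ.2; nlinarith
    simpa using Real.one_le_exp this
  have step2 : ∀ ℓ : Sym2 V → Bool, Real.exp (l * (m/2 - t - X ℓ))
      = Real.exp (l * (m/2 - t)) *
        ∏ e : Sym2 V, (if e ∈ E then Real.exp (-l * (if ℓ e ≠ τ e then (1:ℝ) else 0)) else 1) := by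
    intro ℓ
    have : (∏ e : Sym2 V, (if e ∈ E then Real.exp (-l * (if ℓ e ≠ τ e then (1:ℝ) else 0)) else 1))
        = ∏ e ∈ E, Real.exp (-l * (if ℓ e ≠ τ e then (1:ℝ) else 0)) := by
      rw [Finset.prod_ite_mem, Finset.univ_inter]
    rw [this, ← Real.exp_sum, ← Real.exp_add]
    congr 1
    rw [hX]
    simp only [← Finset.mul_sum]
    ring
  simp only [step2] at step1
  rw [← Finset.mul_sum] at step1
  have step3 : ∑ ℓ : Sym2 V → Bool,
      ∏ e : Sym2 V, (if e ∈ E then Real.exp (-l * (if ℓ e ≠ τ e then (1:ℝ) else 0)) else 1)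
      = ∏ e : Sym2 V, ∑ x : Bool, (if e ∈ E then Real.exp (-l * (if x ≠ τ e then (1:ℝ) else 0)) else 1) := by
    rw [Finset.prod_univ_sum, Fintype.piFinset_univ]
  rw [step3] at step1
  have step4 : ∀ e : Sym2 V, (∑ x : Bool, (if e ∈ E then Real.exp (-l * (if x ≠ τ e then (1:ℝ) else 0)) else 1))
      = if e ∈ E then 1 + Real.exp (-l) else 2 := by
    intro e
    by_cases h : e ∈ E <;> simp [h, Fintype.sum_bool]
    · cases hτ : τ e <;> simp [hτ] <;> ring
  simp only [step4] at step1
  refine le_trans step1 ?_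
  have hfilt : univ.filter (fun x : Sym2 V => x ∈ E) = E := by ext x; simp
  have hfilt2 : univ.filter (fun x : Sym2 V => ¬ x ∈ E) = Eᶜ := by ext x; simp
  have hprod : (∏ x : Sym2 V, (if x ∈ E then 1 + Real.exp (-l) else 2))
      = (1 + Real.exp (-l)) ^ E.card * 2 ^ (Fintype.card (Sym2 V) - E.card) := by
    rw [Finset.prod_ite, hfilt, hfilt2, Finset.prod_const, Finset.prod_const, Finset.card_compl]
  rw [hprod]
  have hexp2 : (2 * Real.exp (l^2/8 - l/2)) ^ E.card
      = 2 ^ E.card * Real.exp (m * (l^2/8 - l/2)) := by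
    rw [mul_pow, ← Real.exp_nat_mul, hm]
  calc Real.exp (l * (m / 2 - t)) * ((1 + Real.exp (-l)) ^ E.card * 2 ^ (Fintype.card (Sym2 V) - E.card))
      ≤ Real.exp (l * (m / 2 - t)) * ((2 ^ E.card * Real.exp (m * (l^2/8 - l/2))) * 2 ^ (Fintype.card (Sym2 V) - E.card)) := by
        rw [← hexp2]
        gcongr
        exact one_add_exp_le' l
    _ = (2:ℝ) ^ E.card * 2 ^ (Fintype.card (Sym2 V) - E.card) *
          Real.exp (l * (m / 2 - t) + m * (l^2/8 - l/2)) := by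
        rw [Real.exp_add]; ring
    _ = 2 ^ Fintype.card (Sym2 V) * Real.exp (-2 * t ^ 2 / m) := by
        rw [← pow_add, Nat.add_sub_cancel' (Finset.card_le_univ E)]
        congr 1
        have : l * (m / 2 - t) + m * (l^2/8 - l/2) = -2 * t^2 / m := by
          rw [hl]; field_simp; ring
        rw [this]

lemma double_sum_eq_two_mul' {V : Type*} [DecidableEq V] [LinearOrder V] (B : Finset V)
    (h : V → V → ℝ) (hsymm : ∀ u v, h u v = h v u) (hdiag : ∀ u, h u u = 0) :
    ∑ u ∈ B, ∑ v ∈ B, h u v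
      = 2 * ∑ p ∈ (B ×ˢ B).filter (fun p => p.1 < p.2), h p.1 p.2 := by
  rw [← Finset.sum_product']
  rw [← Finset.sum_filter_add_sum_filter_not (B ×ˢ B) (fun p => p.1 < p.2)]
  have h2 : ∑ p ∈ (B ×ˢ B).filter (fun p => ¬ p.1 < p.2), h p.1 p.2
      = ∑ p ∈ (B ×ˢ B).filter (fun p => p.1 < p.2), h p.1 p.2 := by
    rw [← Finset.sum_filter_add_sum_filter_not ((B ×ˢ B).filter (fun p => ¬ p.1 < p.2))
      (fun p => p.2 < p.1)]
    have hz : ∑ p ∈ ((B ×ˢ B).filter (fun p => ¬ p.1 < p.2)).filter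
        (fun p => ¬ p.2 < p.1), h p.1 p.2 = 0 := by
      apply Finset.sum_eq_zero
      intro p hp
      simp only [Finset.mem_filter, not_lt] at hp
      have : p.1 = p.2 := le_antisymm hp.2 hp.1.2
      rw [this, hdiag]
    rw [hz, add_zero]
    apply Finset.sum_nbij' (fun p => (p.2, p.1)) (fun p => (p.2, p.1))
    · intro p hp
      simp only [Finset.mem_filter, Finset.mem_product] at hp ⊢
      exact ⟨⟨hp.1.1.2, hp.1.1.1⟩, hp.2⟩
    · intro p hp
      simp only [Finset.mem_filter, Finset.mem_product, not_lt] at hp ⊢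
      exact ⟨⟨⟨hp.1.2, hp.1.1⟩, le_of_lt hp.2⟩, hp.2⟩
    · intro p _; rfl
    · intro p _; rfl
    · intro p _; exact hsymm p.1 p.2
  rw [h2]; ring

variable {V : Type*} [Fintype V] [DecidableEq V]

noncomputable def sb (C : Finset (V × Bool)) (v : V) : Bool :=
  if (v,true) ∈ C then true else false

noncomputable def tauC (C : Finset (V × Bool)) : Sym2 V → Bool :=
  Sym2.lift ⟨fun u v => xor (sb C u) (sb C v), fun u v => Bool.xor_comm _ _⟩

noncomputable def gg (G : SimpleGraph V) (ℓ : Sym2 V → Bool) (C : Finset (V × Bool))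
    (u v : V) : ℝ :=
  ∑ a : Bool, ∑ b : Bool,
    if (u,a) ∈ C ∧ (v,b) ∉ C ∧ (lift2 G ℓ).Adj (u,a) (v,b) then 1 else 0

lemma gg_nonneg (G : SimpleGraph V) (ℓ : Sym2 V → Bool) (C : Finset (V × Bool)) (u v : V) :
    0 ≤ gg G ℓ C u v := by
  unfold gg; positivity

lemma claim1 (G : SimpleGraph V) [DecidableRel G.Adj] (ℓ : Sym2 V → Bool) (C : Finset (V × Bool)) (u v : V) :
    (if ((u,false) ∈ C ∧ (u,true) ∈ C) ∧ ¬((v,false) ∈ C ∧ (v,true) ∈ C) ∧ G.Adj u v then (1:ℝ) else 0)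
    + (if (¬(((u,false) ∈ C) ↔ ((u,true) ∈ C))) ∧ (¬(((v,false) ∈ C) ↔ ((v,true) ∈ C)))
          ∧ (G.Adj u v ∧ ℓ s(u,v) ≠ tauC C s(u,v)) then (1:ℝ) else 0)
    ≤ gg G ℓ C u v := by
  unfold gg tauC sb
  by_cases hadj : G.Adj u v
  · simp only [lift2, Fintype.sum_bool, Sym2.lift_mk]
    by_cases h0 : (u,false) ∈ C <;> by_cases h1 : (u,true) ∈ C <;>
      by_cases h2 : (v,false) ∈ C <;> by_cases h3 : (v,true) ∈ C <;>
      simp_all <;> (rcases hL : ℓ s(u,v) <;> simp_all)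
  · simp [hadj, lift2]

lemma claim2 (G : SimpleGraph V) [DecidableRel G.Adj] (ℓ : Sym2 V → Bool) (C : Finset (V × Bool)) (u v : V) :
    (if ((u,false) ∈ C ∧ (u,true) ∈ C) ∧ (¬(((v,false) ∈ C) ↔ ((v,true) ∈ C))) ∧ G.Adj u v then (1:ℝ) else 0)
    + (if (¬(((u,false) ∈ C) ↔ ((u,true) ∈ C))) ∧ ((v,false) ∉ C ∧ (v,true) ∉ C) ∧ G.Adj u v then (1:ℝ) else 0)
    + (if (¬(((u,false) ∈ C) ↔ ((u,true) ∈ C))) ∧ (¬(((v,false) ∈ C) ↔ ((v,true) ∈ C)))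
          ∧ (G.Adj u v ∧ ℓ s(u,v) ≠ tauC C s(u,v)) then (1:ℝ) else 0)
    ≤ gg G ℓ C u v := by
  unfold gg tauC sb
  by_cases hadj : G.Adj u v
  · simp only [lift2, Fintype.sum_bool, Sym2.lift_mk]
    by_cases h0 : (u,false) ∈ C <;> by_cases h1 : (u,true) ∈ C <;>
      by_cases h2 : (v,false) ∈ C <;> by_cases h3 : (v,true) ∈ C <;>
      simp_all <;> (rcases hL : ℓ s(u,v) <;> simp_all)
  · simp [hadj, lift2]

lemma sum_ite_sets (pS pT : V → Prop) (R : V → V → Prop)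
    (dS : DecidablePred pS) (dT : DecidablePred pT) (dR : ∀ u v, Decidable (R u v))
    (S T : Finset V)
    (hS : ∀ u, u ∈ S ↔ pS u) (hT : ∀ v, v ∈ T ↔ pT v)
    (f : V → V → ℝ) :
    (∑ u : V, ∑ v : V, if pS u ∧ pT v ∧ R u v then f u v else 0)
      = ∑ u ∈ S, ∑ v ∈ T, if R u v then f u v else 0 := by
  have h1 : ∀ u : V, (∑ v : V, if pS u ∧ pT v ∧ R u v then f u v else 0)
      = if u ∈ S then (∑ v : V, if pT v ∧ R u v then f u v else 0) else 0 := by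
    intro u
    by_cases h : pS u
    · simp [h, (hS u).mpr h]
    · have hu : u ∉ S := fun hu => h ((hS u).mp hu)
      simp [h, hu]
  simp only [h1]
  rw [Finset.sum_ite_mem, Finset.univ_inter]
  refine Finset.sum_congr rfl fun u _ => ?_
  have h2 : ∀ v : V, (if pT v ∧ R u v then f u v else 0)
      = if v ∈ T then (if R u v then f u v else 0) else 0 := by
    intro v
    by_cases h : pT v
    · simp [h, (hT v).mpr h]
    · have hv : v ∉ T := fun hv => h ((hT v).mp hv)
      simp [h, hv]
  simp only [h2]
  rw [Finset.sum_ite_mem, Finset.univ_inter]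

set_option maxHeartbeats 2000000 in
lemma perC (G : SimpleGraph V) [DecidableRel G.Adj] (d : ℕ) (φ : ℝ) (hφ : 0 < φ)
    (hreg : ∀ v : V, G.degree v = d)
    (hexp : ∀ S : Finset V, 2 * S.card ≤ Fintype.card V →
      φ * d * S.card ≤ ∑ v ∈ S, ∑ w ∈ Sᶜ, if G.Adj v w then (1 : ℝ) else 0)
    (C : Finset (V × Bool)) :
    ((univ.filter (fun ℓ : Sym2 V → Bool =>
        C.card ≤ Fintype.card V ∧
        (∑ p ∈ C, ∑ q ∈ Cᶜ, if (lift2 G ℓ).Adj p q then (1:ℝ) else 0)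
          < min (φ/4) (1/32) * d * C.card)).card : ℝ)
      ≤ 2 ^ Fintype.card (Sym2 V) *
          Real.exp (-((d:ℝ) * (Fintype.card V)) / 256) := by
  set n := Fintype.card V with hn
  by_cases hCn : C.card ≤ n
  case neg =>
    have he : (univ.filter (fun ℓ : Sym2 V → Bool =>
        C.card ≤ n ∧
        (∑ p ∈ C, ∑ q ∈ Cᶜ, if (lift2 G ℓ).Adj p q then (1:ℝ) else 0)
          < min (φ/4) (1/32) * d * C.card)) = ∅ := by
      apply Finset.filter_eq_empty_iff.mpr
      intro ℓ _ h
      exact hCn h.1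
    rw [he]
    simp only [Finset.card_empty, Nat.cast_zero]
    positivity
  -- abbreviations
  letI : LinearOrder V := LinearOrder.lift' (Fintype.equivFin V) (Fintype.equivFin V).injective
  set αv : ℝ := min (φ/4) (1/32) with hαv
  have hα1 : αv ≤ φ/4 := min_le_left _ _
  have hα2 : αv ≤ 1/32 := min_le_right _ _
  have hα0 : 0 < αv := by
    rw [hαv]; apply lt_min (by linarith) (by norm_num)
  set A : Finset V := univ.filter (fun v : V => (v,false) ∈ C ∧ (v,true) ∈ C) with hA
  set Bs : Finset V := univ.filter
    (fun v : V => ¬(((v,false) ∈ C) ↔ ((v,true) ∈ C))) with hBs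
  set Os : Finset V := univ.filter (fun v : V => (v,false) ∉ C ∧ (v,true) ∉ C) with hOs
  have hAmem : ∀ u : V, u ∈ A ↔ ((u,false) ∈ C ∧ (u,true) ∈ C) := by
    intro u; rw [hA]; simp
  have hBmem : ∀ u : V, u ∈ Bs ↔ ¬(((u,false) ∈ C) ↔ ((u,true) ∈ C)) := by
    intro u; rw [hBs]; simp
  have hOmem : ∀ u : V, u ∈ Os ↔ ((u,false) ∉ C ∧ (u,true) ∉ C) := by
    intro u; rw [hOs]; simp
  set P : Finset (V × V) :=
    (Bs ×ˢ Bs).filter (fun p => p.1 < p.2 ∧ G.Adj p.1 p.2) with hP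
  set E : Finset (Sym2 V) := P.image (fun p : V × V => s(p.1, p.2)) with hE
  -- conversion between ordered double sums over Bs and sums over E
  have hconv : ∀ f : Sym2 V → ℝ,
      (∑ u ∈ Bs, ∑ v ∈ Bs, if G.Adj u v then f (s(u, v)) else 0)
        = 2 * ∑ e ∈ E, f e := by
    intro f
    have hsymm : ∀ u v : V, (if G.Adj u v then f (s(u,v)) else 0)
        = (if G.Adj v u then f (s(v,u)) else 0) := by
      intro u v
      by_cases h : G.Adj u v
      · rw [if_pos h, if_pos h.symm, Sym2.eq_swap]
      · rw [if_neg h, if_neg (fun h' => h h'.symm)]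
    have hdiag : ∀ u : V, (if G.Adj u u then f (s(u,u)) else 0) = 0 := by
      intro u; simp [G.irrefl]
    rw [double_sum_eq_two_mul' Bs _ (fun u v => hsymm u v) hdiag]
    congr 1
    have hstep : ((Bs ×ˢ Bs).filter (fun p => p.1 < p.2)).filter
        (fun p => G.Adj p.1 p.2) = P := by
      rw [Finset.filter_filter]
    rw [← Finset.sum_filter, hstep, hE]
    rw [Finset.sum_image ?_]
    rintro ⟨x1,x2⟩ hx ⟨y1,y2⟩ hy hxy
    rw [hP, Finset.mem_coe, Finset.mem_filter] at hx hy
    have h1 := hx.2.1; have h2 := hy.2.1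
    simp only [Sym2.eq_iff] at hxy
    rcases hxy with ⟨rfl, rfl⟩ | ⟨rfl, rfl⟩
    · rfl
    · exact absurd (h1.trans h2) (lt_irrefl _)
  -- F as double sum of gg
  have hF : ∀ ℓ : Sym2 V → Bool,
      (∑ p ∈ C, ∑ q ∈ Cᶜ, if (lift2 G ℓ).Adj p q then (1:ℝ) else 0)
        = ∑ u : V, ∑ v : V, gg G ℓ C u v := by
    intro ℓ
    have e1 : ∀ p : V × Bool,
        (∑ q ∈ Cᶜ, if (lift2 G ℓ).Adj p q then (1:ℝ) else 0)
          = ∑ q : V × Bool, if q ∉ C ∧ (lift2 G ℓ).Adj p q then 1 else 0 := by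
      intro p
      rw [show (∑ q ∈ Cᶜ, if (lift2 G ℓ).Adj p q then (1:ℝ) else 0)
          = ∑ q : V × Bool, if q ∈ Cᶜ then (if (lift2 G ℓ).Adj p q then (1:ℝ) else 0) else 0 by
        rw [Finset.sum_ite_mem, Finset.univ_inter]]
      refine Finset.sum_congr rfl fun q _ => ?_
      by_cases hq : q ∈ C <;> simp [hq]
    have e2 : (∑ p ∈ C, ∑ q ∈ Cᶜ, if (lift2 G ℓ).Adj p q then (1:ℝ) else 0)
        = ∑ p : V × Bool, ∑ q : V × Bool,
            if p ∈ C ∧ q ∉ C ∧ (lift2 G ℓ).Adj p q then 1 else 0 := by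
      rw [show (∑ p ∈ C, ∑ q ∈ Cᶜ, if (lift2 G ℓ).Adj p q then (1:ℝ) else 0)
          = ∑ p : V × Bool, if p ∈ C then
              (∑ q ∈ Cᶜ, if (lift2 G ℓ).Adj p q then (1:ℝ) else 0) else 0 by
        rw [Finset.sum_ite_mem, Finset.univ_inter]]
      refine Finset.sum_congr rfl fun p _ => ?_
      by_cases hp : p ∈ C
      · rw [if_pos hp, e1 p]
        refine Finset.sum_congr rfl fun q _ => ?_
        by_cases h1 : q ∉ C ∧ (lift2 G ℓ).Adj p q
        · rw [if_pos h1, if_pos ⟨hp, h1⟩]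
        · rw [if_neg h1, if_neg (fun h2 => h1 ⟨h2.2.1, h2.2.2⟩)]
      · rw [if_neg hp]
        rw [eq_comm]
        apply Finset.sum_eq_zero
        intro q _
        exact if_neg (fun h2 => hp h2.1)
    rw [e2]
    simp only [Fintype.sum_prod_type]
    refine Finset.sum_congr rfl fun u _ => ?_
    rw [Finset.sum_comm]
    rfl
  -- cardinality identity
  have hcard : (C.card : ℝ) = 2 * A.card + Bs.card := by
    have h0 : ((C.card : ℕ) : ℝ) = ∑ p : V × Bool, if p ∈ C then (1:ℝ) else 0 := by
      rw [Finset.sum_boole, Finset.filter_mem_eq_inter, Finset.univ_inter]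
    rw [h0, Fintype.sum_prod_type]
    have h1 : ∀ u : V, (∑ a : Bool, if (u,a) ∈ C then (1:ℝ) else 0)
        = (if u ∈ A then (2:ℝ) else 0) + (if u ∈ Bs then 1 else 0) := by
      intro u
      rw [Fintype.sum_bool]
      by_cases h0' : (u,false) ∈ C <;> by_cases h1' : (u,true) ∈ C <;>
        simp [hAmem, hBmem, h0', h1'] <;> norm_num
    simp only [h1]
    rw [Finset.sum_add_distrib, Finset.sum_ite_mem, Finset.univ_inter,
      Finset.sum_ite_mem, Finset.univ_inter, Finset.sum_const, Finset.sum_const]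
    push_cast
    ring
  -- degree identity
  have hdeg : ∀ u : V, (∑ v : V, if G.Adj u v then (1:ℝ) else 0) = d := by
    intro u
    rw [Finset.sum_boole]
    have : (univ.filter (fun v => G.Adj u v)) = G.neighborFinset u := by
      ext v; simp [SimpleGraph.mem_neighborFinset]
    rw [this, SimpleGraph.card_neighborFinset_eq_degree, hreg u]
  -- partition of V
  have hdisj1 : Disjoint A Bs := by
    rw [Finset.disjoint_left]
    intro u hu hv
    rw [hAmem] at hu; rw [hBmem] at hv; tauto
  have hpart : ∀ g : V → ℝ, (∑ v : V, g v)
      = ∑ v ∈ A, g v + ∑ v ∈ Bs, g v + ∑ v ∈ Os, g v := by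
    intro g
    have hdisj2 : Disjoint (A ∪ Bs) Os := by
      rw [Finset.disjoint_left]
      intro u hu hv
      rw [Finset.mem_union] at hu
      rw [hOmem] at hv
      rcases hu with hu | hu
      · rw [hAmem] at hu; tauto
      · rw [hBmem] at hu; tauto
    have hun : (A ∪ Bs) ∪ Os = univ := by
      ext u
      simp only [Finset.mem_union, Finset.mem_univ, iff_true]
      rw [hAmem, hBmem, hOmem]
      tauto
    rw [← hun, Finset.sum_union hdisj2, Finset.sum_union hdisj1]
  -- ====== main quantitative part ======
  set av : ℝ := (A.card : ℝ) with hav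
  set bv : ℝ := (Bs.card : ℝ) with hbv
  have hXnonneg : ∀ ℓ : Sym2 V → Bool,
      0 ≤ ∑ e ∈ E, if ℓ e ≠ tauC C e then (1:ℝ) else 0 := by
    intro ℓ; apply Finset.sum_nonneg; intro e _; positivity
  have hnn : ∀ (S T : Finset V),
      0 ≤ ∑ u ∈ S, ∑ v ∈ T, if G.Adj u v then (1:ℝ) else 0 :=
    fun S T => Finset.sum_nonneg fun u _ => Finset.sum_nonneg fun v _ => by positivity
  have hYconv : ∀ ℓ : Sym2 V → Bool,
      (∑ u ∈ Bs, ∑ v ∈ Bs, if G.Adj u v then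
          (if ℓ (s(u,v)) ≠ tauC C (s(u,v)) then (1:ℝ) else 0) else 0)
        = 2 * ∑ e ∈ E, (if ℓ e ≠ tauC C e then (1:ℝ) else 0) := fun ℓ => hconv (fun e => if ℓ e ≠ tauC C e then (1:ℝ) else 0)
  have hM : (∑ u ∈ Bs, ∑ v ∈ Bs, if G.Adj u v then (1:ℝ) else 0) = 2 * E.card := by
    simpa using hconv (fun _ => (1:ℝ))
  have hBA : (∑ u ∈ Bs, ∑ v ∈ A, if G.Adj u v then (1:ℝ) else 0)
      = ∑ u ∈ A, ∑ v ∈ Bs, if G.Adj u v then (1:ℝ) else 0 := by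
    rw [Finset.sum_comm]
    refine Finset.sum_congr rfl fun u _ => Finset.sum_congr rfl fun v _ => ?_
    by_cases h : G.Adj u v
    · rw [if_pos h.symm, if_pos h]
    · rw [if_neg (fun h' => h h'.symm), if_neg h]
  have hdb : (d:ℝ) * bv
      = (∑ u ∈ Bs, ∑ v ∈ A, if G.Adj u v then (1:ℝ) else 0)
        + 2 * E.card
        + (∑ u ∈ Bs, ∑ v ∈ Os, if G.Adj u v then (1:ℝ) else 0) := by
    have h1 : (∑ u ∈ Bs, ∑ v : V, if G.Adj u v then (1:ℝ) else 0) = (d:ℝ) * bv := by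
      rw [Finset.sum_congr rfl (fun u _ => hdeg u), Finset.sum_const, nsmul_eq_mul, hbv]
      ring
    rw [← h1, ← hM, ← Finset.sum_add_distrib, ← Finset.sum_add_distrib]
    exact Finset.sum_congr rfl fun u _ =>
      hpart (fun v => if G.Adj u v then (1:ℝ) else 0)
  have h2a : 2 * A.card ≤ n := by
    have hbnn : (0:ℝ) ≤ bv := Nat.cast_nonneg _
    have h' : 2 * (A.card:ℝ) ≤ (C.card:ℝ) := by rw [hcard]; linarith
    have h'' : 2 * A.card ≤ C.card := by exact_mod_cast h'
    exact le_trans h'' hCn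
  have hexpA : φ * d * av ≤ ∑ u ∈ A, ∑ v ∈ Aᶜ, if G.Adj u v then (1:ℝ) else 0 :=
    hexp A h2a
  -- lower bound 1
  have hL1 : ∀ ℓ : Sym2 V → Bool,
      φ * d * av + 2 * (∑ e ∈ E, if ℓ e ≠ tauC C e then (1:ℝ) else 0)
        ≤ ∑ p ∈ C, ∑ q ∈ Cᶜ, if (lift2 G ℓ).Adj p q then (1:ℝ) else 0 := by
    intro ℓ
    have hsum : (∑ u : V, ∑ v : V,
        ((if ((u,false) ∈ C ∧ (u,true) ∈ C) ∧ ¬((v,false) ∈ C ∧ (v,true) ∈ C) ∧ G.Adj u v then (1:ℝ) else 0)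
        + (if (¬(((u,false) ∈ C) ↔ ((u,true) ∈ C))) ∧ (¬(((v,false) ∈ C) ↔ ((v,true) ∈ C)))
          ∧ (G.Adj u v ∧ ℓ s(u,v) ≠ tauC C s(u,v)) then (1:ℝ) else 0)))
        ≤ ∑ u : V, ∑ v : V, gg G ℓ C u v :=
      Finset.sum_le_sum fun u _ => Finset.sum_le_sum fun v _ => claim1 G ℓ C u v
    simp only [Finset.sum_add_distrib] at hsum
    have hp1 : (∑ u : V, ∑ v : V, if ((u,false) ∈ C ∧ (u,true) ∈ C) ∧ ¬((v,false) ∈ C ∧ (v,true) ∈ C) ∧ G.Adj u v then (1:ℝ) else 0)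
        = ∑ u ∈ A, ∑ v ∈ Aᶜ, if G.Adj u v then (1:ℝ) else 0 := by
      exact sum_ite_sets (fun u => (u,false) ∈ C ∧ (u,true) ∈ C)
        (fun v => ¬((v,false) ∈ C ∧ (v,true) ∈ C)) G.Adj
        (fun _ => inferInstance) (fun _ => inferInstance) (fun _ _ => inferInstance)
        A Aᶜ hAmem
        (fun v => by rw [Finset.mem_compl, hAmem]) (fun _ _ => (1:ℝ))
    have hp2 : (∑ u : V, ∑ v : V, if (¬(((u,false) ∈ C) ↔ ((u,true) ∈ C))) ∧ (¬(((v,false) ∈ C) ↔ ((v,true) ∈ C))) ∧ (G.Adj u v ∧ ℓ s(u,v) ≠ tauC C s(u,v)) then (1:ℝ) else 0)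
        = 2 * ∑ e ∈ E, (if ℓ e ≠ tauC C e then (1:ℝ) else 0) := by
      rw [sum_ite_sets (fun u => ¬(((u,false) ∈ C) ↔ ((u,true) ∈ C)))
        (fun v => ¬(((v,false) ∈ C) ↔ ((v,true) ∈ C)))
        (fun u v => G.Adj u v ∧ ℓ s(u,v) ≠ tauC C s(u,v))
        (fun _ => inferInstance) (fun _ => inferInstance) (fun _ _ => inferInstance)
        Bs Bs hBmem hBmem (fun _ _ => (1:ℝ))]
      rw [← hYconv ℓ]
      refine Finset.sum_congr rfl fun u _ => Finset.sum_congr rfl fun v _ => ?_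
      by_cases h1 : G.Adj u v <;> by_cases h2 : ℓ s(u,v) ≠ tauC C s(u,v) <;>
        simp [h1, h2]
    rw [hp1, hp2] at hsum
    rw [hF ℓ]
    linarith [hexpA, hsum]
  -- lower bound 2
  have hL2 : ∀ ℓ : Sym2 V → Bool,
      (d:ℝ) * bv - 2 * E.card + 2 * (∑ e ∈ E, if ℓ e ≠ tauC C e then (1:ℝ) else 0)
        ≤ ∑ p ∈ C, ∑ q ∈ Cᶜ, if (lift2 G ℓ).Adj p q then (1:ℝ) else 0 := by
    intro ℓ
    have hsum : (∑ u : V, ∑ v : V,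
        ((if ((u,false) ∈ C ∧ (u,true) ∈ C) ∧ (¬(((v,false) ∈ C) ↔ ((v,true) ∈ C))) ∧ G.Adj u v then (1:ℝ) else 0)
        + (if (¬(((u,false) ∈ C) ↔ ((u,true) ∈ C))) ∧ ((v,false) ∉ C ∧ (v,true) ∉ C) ∧ G.Adj u v then (1:ℝ) else 0)
        + (if (¬(((u,false) ∈ C) ↔ ((u,true) ∈ C))) ∧ (¬(((v,false) ∈ C) ↔ ((v,true) ∈ C)))
          ∧ (G.Adj u v ∧ ℓ s(u,v) ≠ tauC C s(u,v)) then (1:ℝ) else 0)))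
        ≤ ∑ u : V, ∑ v : V, gg G ℓ C u v :=
      Finset.sum_le_sum fun u _ => Finset.sum_le_sum fun v _ => claim2 G ℓ C u v
    simp only [Finset.sum_add_distrib] at hsum
    have hp1 : (∑ u : V, ∑ v : V, if ((u,false) ∈ C ∧ (u,true) ∈ C) ∧ (¬(((v,false) ∈ C) ↔ ((v,true) ∈ C))) ∧ G.Adj u v then (1:ℝ) else 0)
        = ∑ u ∈ A, ∑ v ∈ Bs, if G.Adj u v then (1:ℝ) else 0 :=
      sum_ite_sets _ _ G.Adj (fun _ => inferInstance) (fun _ => inferInstance)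
        (fun _ _ => inferInstance) A Bs hAmem hBmem (fun _ _ => (1:ℝ))
    have hp2 : (∑ u : V, ∑ v : V, if (¬(((u,false) ∈ C) ↔ ((u,true) ∈ C))) ∧ ((v,false) ∉ C ∧ (v,true) ∉ C) ∧ G.Adj u v then (1:ℝ) else 0)
        = ∑ u ∈ Bs, ∑ v ∈ Os, if G.Adj u v then (1:ℝ) else 0 :=
      sum_ite_sets _ _ G.Adj (fun _ => inferInstance) (fun _ => inferInstance)
        (fun _ _ => inferInstance) Bs Os hBmem hOmem (fun _ _ => (1:ℝ))
    have hp3 : (∑ u : V, ∑ v : V, if (¬(((u,false) ∈ C) ↔ ((u,true) ∈ C))) ∧ (¬(((v,false) ∈ C) ↔ ((v,true) ∈ C))) ∧ (G.Adj u v ∧ ℓ s(u,v) ≠ tauC C s(u,v)) then (1:ℝ) else 0)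
        = 2 * ∑ e ∈ E, (if ℓ e ≠ tauC C e then (1:ℝ) else 0) := by
      rw [sum_ite_sets (fun u => ¬(((u,false) ∈ C) ↔ ((u,true) ∈ C)))
        (fun v => ¬(((v,false) ∈ C) ↔ ((v,true) ∈ C)))
        (fun u v => G.Adj u v ∧ ℓ s(u,v) ≠ tauC C s(u,v))
        (fun _ => inferInstance) (fun _ => inferInstance) (fun _ _ => inferInstance)
        Bs Bs hBmem hBmem (fun _ _ => (1:ℝ))]
      rw [← hYconv ℓ]
      refine Finset.sum_congr rfl fun u _ => Finset.sum_congr rfl fun v _ => ?_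
      by_cases h1 : G.Adj u v <;> by_cases h2 : ℓ s(u,v) ≠ tauC C s(u,v) <;>
        simp [h1, h2]
    rw [hp1, hp2, hp3] at hsum
    rw [hF ℓ]
    linarith [hsum, hdb, hBA]
  -- key implication
  have hkey : ∀ ℓ : Sym2 V → Bool,
      (∑ p ∈ C, ∑ q ∈ Cᶜ, if (lift2 G ℓ).Adj p q then (1:ℝ) else 0)
          < αv * d * C.card →
      (∑ e ∈ E, if ℓ e ≠ tauC C e then (1:ℝ) else 0)
          < (E.card:ℝ)/2 - (1 - 2*αv) * d * bv / 4 := by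
    intro ℓ hbad
    have h1 := hL1 ℓ
    have h2 := hL2 ℓ
    rw [hcard] at hbad
    have hda : (0:ℝ) ≤ (d:ℝ) * av := by positivity
    have hfm : 0 ≤ (φ - 4*αv) * ((d:ℝ)*av) := mul_nonneg (by linarith) hda
    nlinarith [h1, h2, hbad, hfm]
  have hdbv : (0:ℝ) ≤ (d:ℝ) * bv := by positivity
  by_cases hb : 2 * Bs.card ≤ n
  · -- deterministic case : the bad set is empty
    have hexpB := hexp Bs hb
    have hcompl : (∑ u ∈ Bs, ∑ w ∈ Bsᶜ, if G.Adj u w then (1:ℝ) else 0)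
        = (d:ℝ) * bv - 2*E.card := by
      have h2 : (∑ u ∈ Bs, ((∑ w ∈ Bs, if G.Adj u w then (1:ℝ) else 0)
          + (∑ w ∈ Bsᶜ, if G.Adj u w then (1:ℝ) else 0))) = (d:ℝ) * bv := by
        have h1 : ∀ u : V, (∑ w ∈ Bs, if G.Adj u w then (1:ℝ) else 0)
            + (∑ w ∈ Bsᶜ, if G.Adj u w then (1:ℝ) else 0) = d := by
          intro u; rw [Finset.sum_add_sum_compl]; exact hdeg u
        rw [Finset.sum_congr rfl fun u _ => h1 u, Finset.sum_const, nsmul_eq_mul, hbv]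
        ring
      rw [Finset.sum_add_distrib, hM] at h2
      linarith
    have hval : (univ.filter (fun ℓ : Sym2 V → Bool =>
        C.card ≤ n ∧
        (∑ p ∈ C, ∑ q ∈ Cᶜ, if (lift2 G ℓ).Adj p q then (1:ℝ) else 0)
          < αv * d * C.card)) = ∅ := by
      apply Finset.filter_eq_empty_iff.mpr
      intro ℓ _ hcontra
      have hx := hkey ℓ hcontra.2
      have hxn := hXnonneg ℓ
      have hpm : 0 ≤ (φ - 2*αv) * ((d:ℝ)*bv) := mul_nonneg (by linarith) hdbv
      rw [hcompl] at hexpB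
      nlinarith [hexpB, hx, hxn, hpm]
    rw [hval]
    simp only [Finset.card_empty, Nat.cast_zero]
    positivity
  · -- probabilistic case
    have hnb : (n:ℝ) < 2 * bv := by
      push_neg at hb
      rw [hbv]
      exact_mod_cast hb
    set t : ℝ := (1 - 2*αv) * d * bv / 4 with htdef
    have ht15 : (15:ℝ)/64 * ((d:ℝ)*bv) ≤ t := by
      rw [htdef]
      nlinarith [mul_nonneg (show (0:ℝ) ≤ 1/16 - 2*αv by linarith) hdbv]
    have ht0 : 0 ≤ t := le_trans (by nlinarith [hdbv]) ht15
    have hEle : (E.card : ℝ) * 2 ≤ (d:ℝ) * bv := by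
      have := hnn Bs A
      have := hnn Bs Os
      linarith [hdb]
    by_cases hEc : E.card = 0
    · have hval : (univ.filter (fun ℓ : Sym2 V → Bool =>
          C.card ≤ n ∧
          (∑ p ∈ C, ∑ q ∈ Cᶜ, if (lift2 G ℓ).Adj p q then (1:ℝ) else 0)
            < αv * d * C.card)) = ∅ := by
        apply Finset.filter_eq_empty_iff.mpr
        intro ℓ _ hcontra
        have hx := hkey ℓ hcontra.2
        have hxn := hXnonneg ℓ
        rw [hEc] at hx
        simp only [Nat.cast_zero] at hx
        linarith
      rw [hval]
      simp only [Finset.card_empty, Nat.cast_zero]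
      positivity
    · have hEc0 : 0 < E.card := Nat.pos_of_ne_zero hEc
      have hEcR : (0:ℝ) < (E.card:ℝ) := by exact_mod_cast hEc0
      have hsub : (univ.filter (fun ℓ : Sym2 V → Bool =>
          C.card ≤ n ∧
          (∑ p ∈ C, ∑ q ∈ Cᶜ, if (lift2 G ℓ).Adj p q then (1:ℝ) else 0)
            < αv * d * C.card))
          ⊆ (univ.filter (fun ℓ : Sym2 V → Bool =>
            (∑ e ∈ E, if ℓ e ≠ tauC C e then (1:ℝ) else 0) < (E.card:ℝ) / 2 - t)) := by
        intro ℓ hl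
        rw [Finset.mem_filter] at hl ⊢
        exact ⟨hl.1, hkey ℓ hl.2.2⟩
      have hch := chernoff_count' E (tauC C) t ht0 hEc0
      have hcard_le : ((univ.filter (fun ℓ : Sym2 V → Bool =>
          C.card ≤ n ∧
          (∑ p ∈ C, ∑ q ∈ Cᶜ, if (lift2 G ℓ).Adj p q then (1:ℝ) else 0)
            < αv * d * C.card)).card : ℝ)
          ≤ ((univ.filter (fun ℓ : Sym2 V → Bool =>
            (∑ e ∈ E, if ℓ e ≠ tauC C e then (1:ℝ) else 0) < (E.card:ℝ) / 2 - t)).card : ℝ) := by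
        exact_mod_cast Finset.card_le_card hsub
      refine le_trans hcard_le (le_trans hch ?_)
      have hexple : -2 * t^2 / (E.card:ℝ) ≤ -((d:ℝ) * n) / 256 := by
        rw [div_le_div_iff₀ hEcR (by norm_num : (0:ℝ) < 256)]
        have e4 : ((15:ℝ)/64*((d:ℝ)*bv))^2 ≤ t^2 := by
          apply pow_le_pow_left₀ (by positivity) ht15
        have hd0 : (0:ℝ) ≤ (d:ℝ) := Nat.cast_nonneg _
        have e1 : (d:ℝ)*n ≤ 2*((d:ℝ)*bv) := by nlinarith [hnb, hd0]
        have e2 : (d:ℝ)*n*(E.card:ℝ) ≤ 2*((d:ℝ)*bv)*(E.card:ℝ) :=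
          mul_le_mul_of_nonneg_right e1 (le_of_lt hEcR)
        have e3 : 2*((d:ℝ)*bv)*(E.card:ℝ) ≤ ((d:ℝ)*bv)^2 := by nlinarith [hEle, hdbv]
        nlinarith [e2, e3, e4, sq_nonneg ((d:ℝ)*bv)]
      calc (2:ℝ) ^ Fintype.card (Sym2 V) * Real.exp (-2 * t ^ 2 / (E.card:ℝ))
          ≤ 2 ^ Fintype.card (Sym2 V) * Real.exp (-((d:ℝ) * n) / 256) := by
            apply mul_le_mul_of_nonneg_left (Real.exp_le_exp.mpr hexple) (by positivity)
        _ = _ := rfl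


end Aux

/-- If `G` is a `d`-regular `φ`-expander on `n` vertices and each edge is labelled by an
independent uniform bit, then with probability at least `1 - 2^{2n} e^{-dn/256}` every
set `C` of at most `n` vertices of the 2-lift `G'` has edge expansion at least
`min(φ/4, 1/32)`. -/
theorem stmt15 {V : Type*} [Fintype V] [DecidableEq V]
    (G : SimpleGraph V) [DecidableRel G.Adj] (d : ℕ) (φ : ℝ)
    (hreg : ∀ v : V, G.degree v = d)
    (hexp : ∀ S : Finset V, 2 * S.card ≤ Fintype.card V →
      φ * d * S.card ≤ ∑ v ∈ S, ∑ w ∈ Sᶜ, if G.Adj v w then (1 : ℝ) else 0) :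
    (1 : ℝ) - 2 ^ (2 * Fintype.card V) *
        Real.exp (-((d : ℝ) * Fintype.card V) / 256) ≤
      ((Finset.univ.filter (fun ℓ : Sym2 V → Bool =>
          ∀ C : Finset (V × Bool), C.card ≤ Fintype.card V →
            min (φ / 4) (1 / 32) * d * C.card ≤
              ∑ p ∈ C, ∑ q ∈ Cᶜ, if (lift2 G ℓ).Adj p q then (1 : ℝ) else 0)).card : ℝ)
        / 2 ^ Fintype.card (Sym2 V) := by
  have hN : (0:ℝ) < 2 ^ Fintype.card (Sym2 V) := by positivity
  have hcard_fun : Fintype.card (Sym2 V → Bool) = 2 ^ Fintype.card (Sym2 V) := by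
    rw [Fintype.card_fun, Fintype.card_bool]
  have hT0 : (0:ℝ) ≤ 2 ^ (2 * Fintype.card V) *
      Real.exp (-((d : ℝ) * Fintype.card V) / 256) := by positivity
  by_cases hφ : 0 < φ
  case neg =>
    push_neg at hφ
    have hα : min (φ/4) (1/32) ≤ 0 := le_trans (min_le_left _ _) (by linarith)
    have hfull : (Finset.univ.filter (fun ℓ : Sym2 V → Bool =>
        ∀ C : Finset (V × Bool), C.card ≤ Fintype.card V →
          min (φ / 4) (1 / 32) * d * C.card ≤
            ∑ p ∈ C, ∑ q ∈ Cᶜ, if (lift2 G ℓ).Adj p q then (1 : ℝ) else 0)) = univ := by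
      apply Finset.filter_true_of_mem
      intro ℓ _ C _
      have h1 : min (φ/4) (1/32) * d * C.card ≤ 0 := by
        have h2 : (0:ℝ) ≤ (d:ℝ) * C.card := by positivity
        nlinarith
      have h3 : (0:ℝ) ≤ ∑ p ∈ C, ∑ q ∈ Cᶜ, if (lift2 G ℓ).Adj p q then (1:ℝ) else 0 :=
        Finset.sum_nonneg fun p _ => Finset.sum_nonneg fun q _ => by positivity
      linarith
    rw [hfull, Finset.card_univ, hcard_fun]
    have : ((2 ^ Fintype.card (Sym2 V) : ℕ) : ℝ) / 2 ^ Fintype.card (Sym2 V) = 1 := by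
      push_cast
      field_simp
    rw [this]
    linarith
  case pos =>
    set n := Fintype.card V with hn
    have hsplit := Finset.card_filter_add_card_filter_not
      (s := (univ : Finset (Sym2 V → Bool)))
      (p := fun ℓ : Sym2 V → Bool =>
        ∀ C : Finset (V × Bool), C.card ≤ n →
          min (φ / 4) (1 / 32) * d * C.card ≤
            ∑ p ∈ C, ∑ q ∈ Cᶜ, if (lift2 G ℓ).Adj p q then (1 : ℝ) else 0)
    rw [Finset.card_univ, hcard_fun] at hsplit
    -- bound the bad set
    have hsubclub : (univ.filter (fun ℓ : Sym2 V → Bool =>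
        ¬ ∀ C : Finset (V × Bool), C.card ≤ n →
          min (φ / 4) (1 / 32) * d * C.card ≤
            ∑ p ∈ C, ∑ q ∈ Cᶜ, if (lift2 G ℓ).Adj p q then (1 : ℝ) else 0))
        ⊆ (univ : Finset (Finset (V × Bool))).biUnion (fun C =>
            univ.filter (fun ℓ : Sym2 V → Bool =>
              C.card ≤ n ∧
              (∑ p ∈ C, ∑ q ∈ Cᶜ, if (lift2 G ℓ).Adj p q then (1:ℝ) else 0)
                < min (φ/4) (1/32) * d * C.card)) := by
      intro ℓ hl
      rw [Finset.mem_filter] at hl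
      push_neg at hl
      obtain ⟨C, hC1, hC2⟩ := hl.2
      rw [Finset.mem_biUnion]
      exact ⟨C, Finset.mem_univ C, by rw [Finset.mem_filter]; exact ⟨Finset.mem_univ _, hC1, hC2⟩⟩
    have hbadnat : (univ.filter (fun ℓ : Sym2 V → Bool =>
        ¬ ∀ C : Finset (V × Bool), C.card ≤ n →
          min (φ / 4) (1 / 32) * d * C.card ≤
            ∑ p ∈ C, ∑ q ∈ Cᶜ, if (lift2 G ℓ).Adj p q then (1 : ℝ) else 0)).card
        ≤ ∑ C : Finset (V × Bool),
            (univ.filter (fun ℓ : Sym2 V → Bool =>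
              C.card ≤ n ∧
              (∑ p ∈ C, ∑ q ∈ Cᶜ, if (lift2 G ℓ).Adj p q then (1:ℝ) else 0)
                < min (φ/4) (1/32) * d * C.card)).card :=
      le_trans (Finset.card_le_card hsubclub) (Finset.card_biUnion_le)
    have hbadreal : ((univ.filter (fun ℓ : Sym2 V → Bool =>
        ¬ ∀ C : Finset (V × Bool), C.card ≤ n →
          min (φ / 4) (1 / 32) * d * C.card ≤
            ∑ p ∈ C, ∑ q ∈ Cᶜ, if (lift2 G ℓ).Adj p q then (1 : ℝ) else 0)).card : ℝ)
        ≤ 2 ^ (2 * n) * (2 ^ Fintype.card (Sym2 V) *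
            Real.exp (-((d:ℝ) * n) / 256)) := by
      have h1 : ((univ.filter (fun ℓ : Sym2 V → Bool =>
        ¬ ∀ C : Finset (V × Bool), C.card ≤ n →
          min (φ / 4) (1 / 32) * d * C.card ≤
            ∑ p ∈ C, ∑ q ∈ Cᶜ, if (lift2 G ℓ).Adj p q then (1 : ℝ) else 0)).card : ℝ)
          ≤ ∑ C : Finset (V × Bool),
          ((univ.filter (fun ℓ : Sym2 V → Bool =>
            C.card ≤ n ∧
            (∑ p ∈ C, ∑ q ∈ Cᶜ, if (lift2 G ℓ).Adj p q then (1:ℝ) else 0)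
              < min (φ/4) (1/32) * d * C.card)).card : ℝ) := by
        exact_mod_cast hbadnat
      refine le_trans h1 ?_
      have h2 : ∀ C : Finset (V × Bool),
          ((univ.filter (fun ℓ : Sym2 V → Bool =>
            C.card ≤ n ∧
            (∑ p ∈ C, ∑ q ∈ Cᶜ, if (lift2 G ℓ).Adj p q then (1:ℝ) else 0)
              < min (φ/4) (1/32) * d * C.card)).card : ℝ)
          ≤ 2 ^ Fintype.card (Sym2 V) * Real.exp (-((d:ℝ) * n) / 256) :=
        fun C => perC G d φ hφ hreg hexp C
      refine le_trans (Finset.sum_le_sum (fun C _ => h2 C)) ?_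
      rw [Finset.sum_const, Finset.card_univ, nsmul_eq_mul]
      have h3 : (Fintype.card (Finset (V × Bool)) : ℝ) = 2 ^ (2 * n) := by
        rw [Fintype.card_finset, Fintype.card_prod, Fintype.card_bool, Nat.mul_comm]
        push_cast
        ring
      rw [h3]
    -- conclude
    rw [le_div_iff₀ hN]
    have hgood : ((univ.filter (fun ℓ : Sym2 V → Bool =>
        ∀ C : Finset (V × Bool), C.card ≤ n →
          min (φ / 4) (1 / 32) * d * C.card ≤
            ∑ p ∈ C, ∑ q ∈ Cᶜ, if (lift2 G ℓ).Adj p q then (1 : ℝ) else 0)).card : ℝ)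
        + ((univ.filter (fun ℓ : Sym2 V → Bool =>
        ¬ ∀ C : Finset (V × Bool), C.card ≤ n →
          min (φ / 4) (1 / 32) * d * C.card ≤
            ∑ p ∈ C, ∑ q ∈ Cᶜ, if (lift2 G ℓ).Adj p q then (1 : ℝ) else 0)).card : ℝ)
        = 2 ^ Fintype.card (Sym2 V) := by
      exact_mod_cast congrArg (Nat.cast (R := ℝ)) hsplit
    nlinarith [hgood, hbadreal, hT0, hN]
end
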